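/- arXiv:1212.3799 — 3 statements merged into one kernel-verified Lean document; each statement's English description precedes it below -/
import Mathlib

section
/- Let N ≥ 1 and let α ∈ ℝ^N be a unit vector. Set Q = N^{−1/2} · Σ_{k=1}^N r_k α_k, where r_1,…,r_N are independent Rademacher random variables. Then for every h with 0 ≤ h < N/2, E(exp(h·Q²)) ≤ 1/√(1 − 2h/N). -/
open MeasureTheory Finset

noncomputable section

/-- The real sign value of a Boolean. -/
def rad (b : Bool) : ℝ := if b then 1 else -1

/-- The uniform probability measure on Boolean vectors, making the coordinates
independent Rademacher random variables. -/
def μrow (N : ℕ) : Measure (Fin N → Bool) :=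
  (PMF.uniformOfFintype (Fin N → Bool)).toMeasure

open Real in
lemma integrable_rexp_quadratic' {b : ℝ} (hb : 0 < b) (c : ℝ) :
    Integrable (fun x : ℝ => Real.exp (-b * x ^ 2 + c * x)) := by
  have h1 : Integrable (fun x : ℝ => Real.exp (-b * x ^ 2)) := integrable_exp_neg_mul_sq hb
  have h2 := (h1.comp_sub_right (c / (2 * b))).const_mul (Real.exp (c ^ 2 / (4 * b)))
  refine h2.congr (Filter.Eventually.of_forall fun x => ?_)
  show Real.exp _ * Real.exp _ = Real.exp _
  rw [← Real.exp_add]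
  congr 1
  field_simp
  ring

open Real in
lemma integral_rexp_quadratic' {b : ℝ} (hb : 0 < b) (c : ℝ) :
    ∫ x : ℝ, Real.exp (-b * x ^ 2 + c * x)
      = Real.sqrt (π / b) * Real.exp (c ^ 2 / (4 * b)) := by
  have hb' : (-(b : ℂ)).re < 0 := by simpa using hb
  have H := integral_cexp_quadratic hb' (c : ℂ) 0
  have hL : ∫ x : ℝ, Complex.exp (-(b : ℂ) * (x : ℂ) ^ 2 + (c : ℂ) * (x : ℂ) + 0)
      = ((∫ x : ℝ, Real.exp (-b * x ^ 2 + c * x) : ℝ) : ℂ) := by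
    calc ∫ x : ℝ, Complex.exp (-(b : ℂ) * (x : ℂ) ^ 2 + (c : ℂ) * (x : ℂ) + 0)
        = ∫ x : ℝ, ((Real.exp (-b * x ^ 2 + c * x) : ℝ) : ℂ) := by
          congr 1; funext x
          rw [Complex.ofReal_exp]
          push_cast
          ring_nf
      _ = ((∫ x : ℝ, Real.exp (-b * x ^ 2 + c * x) : ℝ) : ℂ) := integral_ofReal
  rw [hL] at H
  have hπb : (0:ℝ) ≤ π / b := div_nonneg Real.pi_pos.le hb.le
  have hR : ((π : ℂ) / -(-(b : ℂ))) ^ (1 / 2 : ℂ) * Complex.exp (0 - (c : ℂ) ^ 2 / (4 * -(b : ℂ)))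
      = ((Real.sqrt (π / b) * Real.exp (c ^ 2 / (4 * b)) : ℝ) : ℂ) := by
    have e1 : ((π : ℂ) / -(-(b : ℂ))) = ((π / b : ℝ) : ℂ) := by push_cast; ring
    have e2 : ((π / b : ℝ) : ℂ) ^ (1 / 2 : ℂ) = ((Real.sqrt (π / b) : ℝ) : ℂ) := by
      rw [Real.sqrt_eq_rpow, Complex.ofReal_cpow hπb]
      norm_num
    have e3 : (0 - (c : ℂ) ^ 2 / (4 * -(b : ℂ))) = ((c ^ 2 / (4 * b) : ℝ) : ℂ) := by
      push_cast
      have : (b : ℂ) ≠ 0 := by exact_mod_cast hb.ne'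
      field_simp
      ring
    rw [e1, e2, e3, ← Complex.ofReal_exp, ← Complex.ofReal_mul]
  rw [hR] at H
  exact_mod_cast H

theorem stmt9 {N : ℕ} (hN : 1 ≤ N) (α : Fin N → ℝ) (hα : ∑ k, (α k) ^ 2 = 1)
    (h : ℝ) (hh0 : 0 ≤ h) (hh : h < (N : ℝ) / 2) :
    (∫ ω, Real.exp (h * ((Real.sqrt N)⁻¹ * ∑ k, rad (ω k) * α k) ^ 2) ∂(μrow N))
      ≤ 1 / Real.sqrt (1 - 2 * h / N) := by
  have hN0 : (0:ℝ) < N := by exact_mod_cast hN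
  set t : ℝ := Real.sqrt N with ht
  have ht0 : 0 < t := Real.sqrt_pos.mpr hN0
  set s : ℝ := Real.sqrt (2 * h) with hs
  have hs2 : s ^ 2 = 2 * h := Real.sq_sqrt (by linarith)
  set a : ℝ := 1/2 - h / N with ha
  have ha0 : 0 < a := by
    have : h / N < 1/2 := by rw [div_lt_iff₀ hN0]; linarith
    simp only [ha]; linarith
  set q : (Fin N → Bool) → ℝ := fun ω => t⁻¹ * ∑ k, rad (ω k) * α k with hq
  set w : ℝ := ((2:ℝ) ^ N)⁻¹ with hw
  have hw0 : (0:ℝ) ≤ w := by positivity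
  have hsπ : (0:ℝ) < Real.sqrt (2 * Real.pi) := Real.sqrt_pos.mpr (by positivity)
  -- Step A: integral as a finite sum
  have hA : (∫ ω, Real.exp (h * (q ω) ^ 2) ∂(μrow N))
      = ∑ ω : Fin N → Bool, w * Real.exp (h * (q ω) ^ 2) := by
    rw [μrow, PMF.integral_eq_sum]
    refine Finset.sum_congr rfl fun ω _ => ?_
    rw [PMF.uniformOfFintype_apply, smul_eq_mul]
    congr 1
    rw [ENNReal.toReal_inv]
    simp [Fintype.card_fun, hw]
  -- Step B: Gaussian representation of exp(h q²)
  have hB : ∀ ω : Fin N → Bool, w * Real.exp (h * (q ω) ^ 2)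
      = (Real.sqrt (2 * Real.pi))⁻¹
        * ∫ x : ℝ, w * Real.exp (-(1/2) * x ^ 2 + (s * q ω) * x) := by
    intro ω
    rw [integral_const_mul, integral_rexp_quadratic' one_half_pos]
    have h1 : (s * q ω) ^ 2 / (4 * (1/2)) = h * (q ω) ^ 2 := by
      rw [mul_pow, hs2]; ring
    have h2 : Real.pi / (1/2 : ℝ) = 2 * Real.pi := by ring
    rw [h1, h2]
    field_simp
  -- integrability
  have hInt : ∀ ω : Fin N → Bool,
      Integrable (fun x : ℝ => w * Real.exp (-(1/2) * x ^ 2 + (s * q ω) * x)) :=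
    fun ω => (integrable_rexp_quadratic' one_half_pos _).const_mul w
  -- Step D/E : pointwise bound of the swapped sum
  have hDE : ∀ x : ℝ,
      ∑ ω : Fin N → Bool, w * Real.exp (-(1/2) * x ^ 2 + (s * q ω) * x)
        ≤ Real.exp (-a * x ^ 2) := by
    intro x
    set c : Fin N → ℝ := fun k => s * x * t⁻¹ * α k with hc
    have e1 : ∀ ω : Fin N → Bool, Real.exp (-(1/2) * x ^ 2 + (s * q ω) * x)
        = Real.exp (-(1/2) * x ^ 2) * ∏ k, Real.exp (c k * rad (ω k)) := by
      intro ω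
      rw [← Real.exp_sum, ← Real.exp_add]
      congr 1
      have : (s * q ω) * x = ∑ k, c k * rad (ω k) := by
        simp only [hq, hc, Finset.mul_sum, Finset.sum_mul]
        exact Finset.sum_congr rfl fun k _ => by ring
      rw [this]
    have e2 : ∑ ω : Fin N → Bool, ∏ k, Real.exp (c k * rad (ω k))
        = ∏ k, (Real.exp (c k) + Real.exp (-(c k))) := by
      rw [← Fintype.piFinset_univ,
        ← Finset.prod_univ_sum (fun _ : Fin N => (Finset.univ : Finset Bool))
          (fun k b => Real.exp (c k * rad b))]
      refine Finset.prod_congr rfl fun k _ => ?_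
      simp [rad, mul_comm]
    have e3 : ∑ ω : Fin N → Bool, w * Real.exp (-(1/2) * x ^ 2 + (s * q ω) * x)
        = Real.exp (-(1/2) * x ^ 2) * ∏ k, Real.cosh (c k) := by
      have coshprod : ∏ k : Fin N, Real.cosh (c k)
          = w * ∏ k, (Real.exp (c k) + Real.exp (-(c k))) := by
        simp only [Real.cosh_eq]
        rw [Finset.prod_div_distrib, Finset.prod_const, Finset.card_univ, Fintype.card_fin,
          div_eq_inv_mul]
      calc ∑ ω : Fin N → Bool, w * Real.exp (-(1/2) * x ^ 2 + (s * q ω) * x)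
          = ∑ ω : Fin N → Bool,
              (w * Real.exp (-(1/2) * x ^ 2)) * ∏ k, Real.exp (c k * rad (ω k)) := by
            refine Finset.sum_congr rfl fun ω _ => ?_
            rw [e1 ω]; ring
        _ = (w * Real.exp (-(1/2) * x ^ 2))
              * ∑ ω : Fin N → Bool, ∏ k, Real.exp (c k * rad (ω k)) := by
            rw [Finset.mul_sum]
        _ = Real.exp (-(1/2) * x ^ 2) * ∏ k, Real.cosh (c k) := by
            rw [e2, coshprod]; ring
    rw [e3]
    have e4 : ∏ k : Fin N, Real.cosh (c k) ≤ Real.exp ((h / N) * x ^ 2) := by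
      have step1 : ∏ k : Fin N, Real.cosh (c k) ≤ ∏ k, Real.exp ((c k) ^ 2 / 2) :=
        Finset.prod_le_prod (fun k _ => (Real.cosh_pos (x := c k)).le)
          (fun k _ => Real.cosh_le_exp_half_sq _)
      have step2 : ∏ k : Fin N, Real.exp ((c k) ^ 2 / 2) = Real.exp (∑ k, (c k) ^ 2 / 2) :=
        (Real.exp_sum _ _).symm
      have step3 : ∑ k : Fin N, (c k) ^ 2 / 2 = (h / N) * x ^ 2 := by
        have htinv : (t⁻¹) ^ 2 = (N : ℝ)⁻¹ := by
          rw [inv_pow, ht, Real.sq_sqrt hN0.le]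
        have : ∀ k, (c k) ^ 2 / 2 = (s ^ 2 * (t⁻¹) ^ 2 * x ^ 2 / 2) * (α k) ^ 2 := by
          intro k; simp only [hc]; ring
        rw [Finset.sum_congr rfl fun k _ => this k, ← Finset.mul_sum, hα, hs2, htinv]
        field_simp
      calc ∏ k : Fin N, Real.cosh (c k) ≤ Real.exp (∑ k, (c k) ^ 2 / 2) := by
            rw [← step2]; exact step1
        _ = Real.exp ((h / N) * x ^ 2) := by rw [step3]
    calc Real.exp (-(1/2) * x ^ 2) * ∏ k, Real.cosh (c k)
        ≤ Real.exp (-(1/2) * x ^ 2) * Real.exp ((h / N) * x ^ 2) :=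
          mul_le_mul_of_nonneg_left e4 (Real.exp_nonneg _)
      _ = Real.exp (-a * x ^ 2) := by rw [← Real.exp_add]; congr 1; simp only [ha]; ring
  -- assemble
  have key : (∫ ω, Real.exp (h * (q ω) ^ 2) ∂(μrow N))
      ≤ (Real.sqrt (2 * Real.pi))⁻¹ * ∫ x : ℝ, Real.exp (-a * x ^ 2) := by
    rw [hA, Finset.sum_congr rfl fun ω _ => hB ω, ← Finset.mul_sum]
    refine mul_le_mul_of_nonneg_left ?_ (by positivity)
    rw [← integral_finset_sum Finset.univ fun ω _ => hInt ω]
    refine integral_mono_of_nonneg (Filter.Eventually.of_forall fun x => ?_)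
      (integrable_exp_neg_mul_sq ha0) (Filter.Eventually.of_forall fun x => hDE x)
    exact Finset.sum_nonneg fun ω _ => mul_nonneg hw0 (Real.exp_nonneg _)
  have final : (Real.sqrt (2 * Real.pi))⁻¹ * ∫ x : ℝ, Real.exp (-a * x ^ 2)
      = 1 / Real.sqrt (1 - 2 * h / N) := by
    rw [integral_gaussian]
    have h2a : 1 - 2 * h / (N : ℝ) = 2 * a := by simp only [ha]; ring
    have e : Real.pi / a = (2 * Real.pi) / (2 * a) := by
      rw [mul_div_mul_left _ _ (two_ne_zero)]
    rw [e, Real.sqrt_div (by positivity), h2a]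
    field_simp
  calc (∫ ω, Real.exp (h * (q ω) ^ 2) ∂(μrow N))
      ≤ (Real.sqrt (2 * Real.pi))⁻¹ * ∫ x : ℝ, Real.exp (-a * x ^ 2) := key
    _ = 1 / Real.sqrt (1 - 2 * h / N) := final
end
end

section
/- Let Φ be an n × N real matrix, k ≥ 1, and suppose there exists δ with 0 < δ < √2 − 1 such that (1−δ)·‖w‖₂² ≤ ‖Φw‖₂² ≤ (1+δ)·‖w‖₂² for every 2k-sparse vector w ∈ ℝ^N. Then there exists a constant C₀, depending only on δ, such that for every x ∈ ℝ^N, setting y = Φx, any vector x* with Φx* = y and ‖x*‖₁ ≤ ‖z‖₁ for all z with Φz = y satisfies ‖x* − x‖₁ ≤ C₀·‖x − x_{(k)}‖₁ and ‖x* − x‖₂ ≤ C₀·k^{−1/2}·‖x − x_{(k)}‖₁, where x_{(k)} is obtained from x by setting all but the k largest-magnitude entries to zero. -/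
open Finset

noncomputable section

namespace Stmt13

variable {N : ℕ}

/-- restriction of a vector to a set of coordinates -/
def res (S : Finset (Fin N)) (x : Fin N → ℝ) : Fin N → ℝ := fun j => if j ∈ S then x j else 0

/-- Euclidean norm -/
noncomputable def en (x : Fin N → ℝ) : ℝ := Real.sqrt (∑ j, x j ^ 2)

lemma en_nonneg (x : Fin N → ℝ) : 0 ≤ en x := Real.sqrt_nonneg _

lemma sq_en (x : Fin N → ℝ) : en x ^ 2 = ∑ j, x j ^ 2 := Real.sq_sqrt (by positivity)

lemma le_of_sq_le_sq (a b : ℝ) (ha : 0 ≤ a) (hb : 0 ≤ b) (h : a ^ 2 ≤ b ^ 2) : a ≤ b := by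
  nlinarith

lemma en_add_le (x y : Fin N → ℝ) : en (x + y) ≤ en x + en y := by
  have hcs : ∑ j, x j * y j ≤ en x * en y := Real.sum_mul_le_sqrt_mul_sqrt _ _ _
  refine le_of_sq_le_sq _ _ (en_nonneg _) (add_nonneg (en_nonneg _) (en_nonneg _)) ?_
  rw [sq_en]
  have hx := sq_en x
  have hy := sq_en y
  have : ∑ j, (x + y) j ^ 2 = (∑ j, x j ^ 2) + 2 * (∑ j, x j * y j) + ∑ j, y j ^ 2 := by
    rw [Finset.mul_sum, ← Finset.sum_add_distrib, ← Finset.sum_add_distrib]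
    exact Finset.sum_congr rfl fun j _ => by simp [Pi.add_apply]; ring
  nlinarith
lemma en_zero : en (0 : Fin N → ℝ) = 0 := by simp [en]

lemma en_listsum_le (L : List (Fin N → ℝ)) : en L.sum ≤ (L.map en).sum := by
  induction L with
  | nil => simp [en_zero]
  | cons a L ih =>
      simp only [List.sum_cons, List.map_cons]
      exact (en_add_le _ _).trans (by linarith)

lemma res_apply (S : Finset (Fin N)) (x : Fin N → ℝ) (j : Fin N) :
    res S x j = if j ∈ S then x j else 0 := rfl

lemma supp_res_subset (S : Finset (Fin N)) (x : Fin N → ℝ) :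
    (univ.filter fun j => res S x j ≠ 0) ⊆ S := by
  intro j hj
  simp only [mem_filter, res] at hj
  by_contra h
  simp [h] at hj

lemma sum_sq_res (S : Finset (Fin N)) (x : Fin N → ℝ) :
    ∑ j, res S x j ^ 2 = ∑ j ∈ S, x j ^ 2 := by
  rw [← Finset.sum_filter_add_sum_filter_not univ (fun j => j ∈ S)]
  have h1 : ∀ j ∈ univ.filter (fun j => j ∈ S), res S x j ^ 2 = x j ^ 2 := by
    intro j hj; simp only [mem_filter] at hj; simp [res, hj.2]
  have h2 : ∀ j ∈ univ.filter (fun j => ¬ j ∈ S), res S x j ^ 2 = 0 := by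
    intro j hj; simp only [mem_filter] at hj; simp [res, hj.2]
  rw [Finset.sum_congr rfl h1, Finset.sum_congr rfl h2, Finset.sum_const_zero, add_zero,
    Finset.filter_mem_eq_inter, Finset.univ_inter]

lemma en_res (S : Finset (Fin N)) (x : Fin N → ℝ) :
    en (res S x) = Real.sqrt (∑ j ∈ S, x j ^ 2) := by rw [en, sum_sq_res]

lemma res_add_res_compl (S : Finset (Fin N)) (x : Fin N → ℝ) :
    res S x + res Sᶜ x = x := by
  funext j
  by_cases h : j ∈ S <;> simp [res, h, Pi.add_apply]

lemma mem_foldr_union (L : List (Finset (Fin N))) (j : Fin N) :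
    j ∈ L.foldr (· ∪ ·) ∅ ↔ ∃ B ∈ L, j ∈ B := by
  induction L with
  | nil => simp
  | cons B L ih => simp [ih]

lemma res_foldr (L : List (Finset (Fin N))) (hd : L.Pairwise Disjoint) (x : Fin N → ℝ) :
    res (L.foldr (· ∪ ·) ∅) x = (L.map (fun B => res B x)).sum := by
  induction L with
  | nil => funext j; simp [res]
  | cons B L ih =>
      obtain ⟨hdB, hdL⟩ := List.pairwise_cons.mp hd
      funext j
      simp only [List.foldr_cons, List.map_cons, List.sum_cons, Pi.add_apply, ← ih hdL]
      by_cases hB : j ∈ B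
      · have hnot : j ∉ L.foldr (· ∪ ·) ∅ := by
          rw [mem_foldr_union]
          rintro ⟨C, hC, hjC⟩
          exact Finset.disjoint_left.mp (hdB C hC) hB hjC
        simp [res, hB, hnot]
      · by_cases hF : j ∈ L.foldr (· ∪ ·) ∅ <;> simp [res, hB, hF]

/-- existence of a "top block" of given size -/
lemma exists_top_block (g : Fin N → ℝ) (A : Finset (Fin N)) :
    ∀ m, m ≤ A.card → ∃ B, B ⊆ A ∧ B.card = m ∧ ∀ i ∈ B, ∀ j ∈ A \ B, |g j| ≤ |g i| := by
  intro m
  induction m with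
  | zero => exact fun _ => ⟨∅, empty_subset _, card_empty, by simp⟩
  | succ m ih =>
      intro hm
      obtain ⟨B, hBA, hBcard, hBtop⟩ := ih (le_trans (Nat.le_succ m) hm)
      have hne : (A \ B).Nonempty := by
        rw [← card_pos, card_sdiff_of_subset hBA]; omega
      obtain ⟨j0, hj0, hj0max⟩ := (A \ B).exists_max_image (fun j => |g j|) hne
      obtain ⟨hj0A, hj0B⟩ := mem_sdiff.mp hj0
      refine ⟨insert j0 B, insert_subset hj0A hBA, ?_, ?_⟩
      · rw [card_insert_of_notMem hj0B, hBcard]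
      · intro i hi j hj
        obtain ⟨hjA, hjI⟩ := mem_sdiff.mp hj
        have hjB : j ∈ A \ B :=
          mem_sdiff.mpr ⟨hjA, fun h => hjI (mem_insert_of_mem h)⟩
        rcases mem_insert.mp hi with h | h
        · subst h; exact hj0max j hjB
        · exact hBtop i h j hjB


lemma chunks (g : Fin N → ℝ) (k : ℕ) (hk : 1 ≤ k) :
    ∀ (m : ℕ) (A : Finset (Fin N)), A.card ≤ m →
    ∃ L : List (Finset (Fin N)),
      (∀ B ∈ L, B ⊆ A ∧ B.card ≤ k) ∧
      L.Pairwise Disjoint ∧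
      (∀ j ∈ A, ∃ B ∈ L, j ∈ B) ∧
      ((L.tail.map (fun B => en (res B g))).sum ≤ (Real.sqrt k)⁻¹ * ∑ j ∈ A, |g j|) := by
  have hk0 : (0:ℝ) < (k:ℝ) := by exact_mod_cast hk
  intro m
  induction m with
  | zero =>
      intro A hA
      have : A = ∅ := card_eq_zero.mp (Nat.le_zero.mp hA)
      subst this
      exact ⟨[], by simp, by simp, by simp, by simp⟩
  | succ m ih =>
      intro A hA
      by_cases hAe : A = ∅
      · subst hAe; exact ⟨[], by simp, by simp, by simp, by simp⟩
      have hApos : 0 < A.card := card_pos.mpr (nonempty_iff_ne_empty.mpr hAe)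
      obtain ⟨B, hBA, hBcard, hBtop⟩ :=
        exists_top_block g A (min k A.card) (min_le_right _ _)
      have hBpos : 0 < B.card := by rw [hBcard]; omega
      have hA'card : (A \ B).card ≤ m := by
        rw [card_sdiff_of_subset hBA]; omega
      obtain ⟨L', hL'sub, hL'disj, hL'cov, hL'sum⟩ := ih (A \ B) hA'card
      have hsubA' : ∀ B' ∈ L', B' ⊆ A \ B := fun B' h => (hL'sub B' h).1
      refine ⟨B :: L', ?_, ?_, ?_, ?_⟩
      · intro B' hB'
        rcases List.mem_cons.mp hB' with h | h
        · subst h; exact ⟨hBA, by rw [hBcard]; exact min_le_left _ _⟩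
        · exact ⟨(hsubA' B' h).trans sdiff_subset, (hL'sub B' h).2⟩
      · refine List.pairwise_cons.mpr ⟨fun C hC => ?_, hL'disj⟩
        exact Finset.disjoint_left.mpr fun a haB haC =>
          (mem_sdiff.mp (hsubA' C hC haC)).2 haB
      · intro j hj
        by_cases hjB : j ∈ B
        · exact ⟨B, List.mem_cons_self, hjB⟩
        · obtain ⟨C, hC, hjC⟩ := hL'cov j (mem_sdiff.mpr ⟨hj, hjB⟩)
          exact ⟨C, List.mem_cons_of_mem _ hC, hjC⟩
      · -- the tail sum estimate
        have hsplit : ∑ j ∈ A \ B, |g j| + ∑ j ∈ B, |g j| = ∑ j ∈ A, |g j| :=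
          Finset.sum_sdiff hBA
        have hsB0 : (0:ℝ) ≤ ∑ j ∈ B, |g j| := Finset.sum_nonneg fun _ _ => abs_nonneg _
        have hsA'0 : (0:ℝ) ≤ ∑ j ∈ A \ B, |g j| := Finset.sum_nonneg fun _ _ => abs_nonneg _
        show ((L'.map (fun B => en (res B g))).sum ≤ (Real.sqrt k)⁻¹ * ∑ j ∈ A, |g j|)
        cases L' with
        | nil =>
            simp only [List.map_nil, List.sum_nil]
            positivity
        | cons C L'' =>
            have hCA' : C ⊆ A \ B := hsubA' C (List.mem_cons_self)
            have hCk : C.card ≤ k := (hL'sub C (List.mem_cons_self)).2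
            have htail : ((L''.map (fun B => en (res B g))).sum
                ≤ (Real.sqrt k)⁻¹ * ∑ j ∈ A \ B, |g j|) := hL'sum
            have claim : en (res C g) ≤ (Real.sqrt k)⁻¹ * ∑ j ∈ B, |g j| := by
              by_cases hA'e : A \ B = ∅
              · have hCE : C = ∅ := Finset.subset_empty.mp (hA'e ▸ hCA')
                subst hCE
                rw [en_res]
                simp only [Finset.sum_empty, Real.sqrt_zero]
                positivity
              · have hBk : B.card = k := by
                  have h1 : 0 < (A \ B).card :=
                    card_pos.mpr (nonempty_iff_ne_empty.mpr hA'e)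
                  rw [card_sdiff_of_subset hBA] at h1
                  omega
                set sB := ∑ j ∈ B, |g j| with hsBdef
                have key : ∀ i ∈ C, |g i| * k ≤ sB := by
                  intro i hi
                  have hiA' := hCA' hi
                  calc |g i| * (k:ℝ) = ∑ _j ∈ B, |g i| := by
                        rw [Finset.sum_const, hBk, nsmul_eq_mul, mul_comm]
                    _ ≤ sB := Finset.sum_le_sum fun i₀ h₀ => hBtop i₀ h₀ i hiA'
                have key' : ∀ i ∈ C, |g i| ≤ sB / k := fun i hi => by
                  rw [le_div_iff₀ hk0]; exact key i hi
                have hsC : ∑ j ∈ C, |g j| ≤ sB := by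
                  calc ∑ j ∈ C, |g j| ≤ ∑ _j ∈ C, sB / k :=
                        Finset.sum_le_sum key'
                    _ = (C.card : ℝ) * (sB / k) := by
                        rw [Finset.sum_const, nsmul_eq_mul]
                    _ ≤ (k:ℝ) * (sB / k) := by
                        have : (C.card : ℝ) ≤ (k : ℝ) := by exact_mod_cast hCk
                        exact mul_le_mul_of_nonneg_right this (by positivity)
                    _ = sB := by field_simp
                have hsq : en (res C g) ^ 2 ≤ sB ^ 2 / k := by
                  rw [sq_en, sum_sq_res]
                  calc ∑ j ∈ C, g j ^ 2 ≤ ∑ j ∈ C, |g j| * (sB / k) := by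
                        refine Finset.sum_le_sum fun i hi => ?_
                        have h2 : g i ^ 2 = |g i| * |g i| := by
                          rw [← abs_mul, abs_mul_self]; ring
                        rw [h2]
                        exact mul_le_mul_of_nonneg_left (key' i hi) (abs_nonneg _)
                    _ = (∑ j ∈ C, |g j|) * (sB / k) := by rw [← Finset.sum_mul]
                    _ ≤ sB * (sB / k) := mul_le_mul_of_nonneg_right hsC (by positivity)
                    _ = sB ^ 2 / k := by ring
                refine le_of_sq_le_sq _ _ (en_nonneg _) (by positivity) ?_
                have hsqk : (Real.sqrt k) ^ 2 = (k:ℝ) := Real.sq_sqrt (by positivity)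
                have hkne : Real.sqrt k ≠ 0 := by
                  intro h; rw [h] at hsqk; simp at hsqk; linarith
                calc en (res C g) ^ 2 ≤ sB ^ 2 / k := hsq
                  _ = ((Real.sqrt k)⁻¹ * sB) ^ 2 := by
                      rw [mul_pow, inv_pow, hsqk]; ring
            calc ((C :: L'').map (fun B => en (res B g))).sum
                = en (res C g) + (L''.map (fun B => en (res B g))).sum := by
                  simp [List.map_cons, List.sum_cons]
              _ ≤ (Real.sqrt k)⁻¹ * ∑ j ∈ B, |g j|
                  + (Real.sqrt k)⁻¹ * ∑ j ∈ A \ B, |g j| := add_le_add claim htail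
              _ = (Real.sqrt k)⁻¹ * ∑ j ∈ A, |g j| := by
                  rw [← hsplit]; ring


lemma sum_sq_add_expand {n : ℕ} (a b : Fin n → ℝ) :
    ∑ i, (a + b) i ^ 2 = ∑ i, a i ^ 2 + 2 * ∑ i, a i * b i + ∑ i, b i ^ 2 := by
  rw [Finset.mul_sum, ← Finset.sum_add_distrib, ← Finset.sum_add_distrib]
  exact Finset.sum_congr rfl fun i _ => by simp only [Pi.add_apply]; ring

lemma sum_sq_sub_expand {n : ℕ} (a b : Fin n → ℝ) :
    ∑ i, (a - b) i ^ 2 = ∑ i, a i ^ 2 - 2 * ∑ i, a i * b i + ∑ i, b i ^ 2 := by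
  rw [Finset.mul_sum, ← Finset.sum_sub_distrib, ← Finset.sum_add_distrib]
  exact Finset.sum_congr rfl fun i _ => by simp only [Pi.sub_apply]; ring

lemma ro_aux {n N k : ℕ} {δ : ℝ} (Φ : Matrix (Fin n) (Fin N) ℝ)
    (hRIP : ∀ w : Fin N → ℝ, (univ.filter (fun j => w j ≠ 0)).card ≤ 2*k →
       (1-δ) * ∑ j, w j^2 ≤ ∑ i, (Φ.mulVec w i)^2 ∧
       ∑ i, (Φ.mulVec w i)^2 ≤ (1+δ) * ∑ j, w j^2)
    (u v : Fin N → ℝ)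
    (hcard : (univ.filter (fun j => u j ≠ 0)).card
        + (univ.filter (fun j => v j ≠ 0)).card ≤ 2*k)
    (hdisj : ∀ j, u j = 0 ∨ v j = 0) :
    |∑ i, Φ.mulVec u i * Φ.mulVec v i|
      ≤ δ * ((∑ j, u j ^ 2) + ∑ j, v j ^ 2) / 2 := by
  have hsupp : ∀ c : ℝ, (univ.filter (fun j => (u + c • v) j ≠ 0)).card ≤ 2*k := by
    intro c
    refine le_trans (le_trans (card_le_card ?_) (card_union_le _ _)) hcard
    intro j hj
    simp only [mem_filter, mem_univ, true_and, Pi.add_apply, Pi.smul_apply,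
      smul_eq_mul] at hj
    rw [mem_union, mem_filter, mem_filter]
    by_cases hu : u j = 0
    · refine Or.inr ⟨mem_univ _, fun hv => ?_⟩
      rw [hu, hv] at hj; simp at hj
    · exact Or.inl ⟨mem_univ _, hu⟩
  have hsq : ∀ c : ℝ, c^2 = 1 → ∑ j, (u + c • v) j ^ 2 = ∑ j, u j ^2 + ∑ j, v j ^2 := by
    intro c hc
    rw [← Finset.sum_add_distrib]
    refine Finset.sum_congr rfl fun j _ => ?_
    rcases hdisj j with h | h <;>
      simp only [Pi.add_apply, Pi.smul_apply, smul_eq_mul, h, mul_zero, add_zero,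
        zero_add, mul_pow, hc, one_mul, zero_pow, two_ne_zero, ne_eq,
        not_false_iff] <;> ring
  have h1 := hRIP (u + (1:ℝ) • v) (hsupp 1)
  have h2 := hRIP (u + (-1:ℝ) • v) (hsupp (-1))
  have e1 : ∑ j, (u + (1:ℝ) • v) j ^ 2 = ∑ j, u j ^2 + ∑ j, v j ^2 := hsq 1 (by norm_num)
  have e2 : ∑ j, (u + (-1:ℝ) • v) j ^ 2 = ∑ j, u j ^2 + ∑ j, v j ^2 := hsq (-1) (by norm_num)
  have m1 : Φ.mulVec (u + (1:ℝ) • v) = Φ.mulVec u + Φ.mulVec v := by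
    rw [Matrix.mulVec_add, Matrix.mulVec_smul]; simp
  have m2 : Φ.mulVec (u + (-1:ℝ) • v) = Φ.mulVec u - Φ.mulVec v := by
    rw [Matrix.mulVec_add, Matrix.mulVec_smul]
    funext i; simp [Pi.smul_apply]; ring
  rw [e1, m1] at h1
  rw [e2, m2] at h2
  rw [sum_sq_add_expand] at h1
  rw [sum_sq_sub_expand] at h2
  rw [abs_le]
  constructor <;> [nlinarith [h1.1, h2.2]; nlinarith [h1.2, h2.1]]

lemma ro {n N k : ℕ} {δ : ℝ} (Φ : Matrix (Fin n) (Fin N) ℝ)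
    (hRIP : ∀ w : Fin N → ℝ, (univ.filter (fun j => w j ≠ 0)).card ≤ 2*k →
       (1-δ) * ∑ j, w j^2 ≤ ∑ i, (Φ.mulVec w i)^2 ∧
       ∑ i, (Φ.mulVec w i)^2 ≤ (1+δ) * ∑ j, w j^2)
    (u v : Fin N → ℝ)
    (hcard : (univ.filter (fun j => u j ≠ 0)).card
        + (univ.filter (fun j => v j ≠ 0)).card ≤ 2*k)
    (hdisj : ∀ j, u j = 0 ∨ v j = 0) :
    |∑ i, Φ.mulVec u i * Φ.mulVec v i| ≤ δ * (en u * en v) := by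
  have ha0 : (0:ℝ) ≤ ∑ j, u j ^ 2 := Finset.sum_nonneg fun _ _ => sq_nonneg _
  have hb0 : (0:ℝ) ≤ ∑ j, v j ^ 2 := Finset.sum_nonneg fun _ _ => sq_nonneg _
  by_cases ha : ∑ j, u j ^ 2 = 0
  · have hu : u = 0 := by
      funext j
      have := (Finset.sum_eq_zero_iff_of_nonneg
        (fun j _ => sq_nonneg (u j))).mp ha j (mem_univ j)
      exact pow_eq_zero_iff two_ne_zero |>.mp this
    rw [hu, Matrix.mulVec_zero]
    simp [en_nonneg, mul_nonneg, en]
  by_cases hb : ∑ j, v j ^ 2 = 0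
  · have hv : v = 0 := by
      funext j
      have := (Finset.sum_eq_zero_iff_of_nonneg
        (fun j _ => sq_nonneg (v j))).mp hb j (mem_univ j)
      exact pow_eq_zero_iff two_ne_zero |>.mp this
    rw [hv, Matrix.mulVec_zero]
    simp [en_nonneg, mul_nonneg, en]
  have hapos : (0:ℝ) < ∑ j, u j ^ 2 := lt_of_le_of_ne ha0 (Ne.symm ha)
  have hbpos : (0:ℝ) < ∑ j, v j ^ 2 := lt_of_le_of_ne hb0 (Ne.symm hb)
  set a := ∑ j, u j ^ 2
  set b := ∑ j, v j ^ 2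
  have hsa : (0:ℝ) < Real.sqrt a := Real.sqrt_pos.mpr hapos
  have hsb : (0:ℝ) < Real.sqrt b := Real.sqrt_pos.mpr hbpos
  set t := Real.sqrt (Real.sqrt b / Real.sqrt a) with htdef
  have ht : (0:ℝ) < t := Real.sqrt_pos.mpr (div_pos hsb hsa)
  have ht2 : t ^ 2 = Real.sqrt b / Real.sqrt a := Real.sq_sqrt (le_of_lt (div_pos hsb hsa))
  have hti2 : (t⁻¹) ^ 2 = Real.sqrt a / Real.sqrt b := by
    rw [inv_pow, ht2, inv_div]
  set u' := t • u with hu'def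
  set v' := t⁻¹ • v with hv'def
  have hsupp_u : (univ.filter (fun j => u' j ≠ 0)) = (univ.filter (fun j => u j ≠ 0)) := by
    refine Finset.filter_congr fun j _ => ?_
    simp only [hu'def, Pi.smul_apply, smul_eq_mul, ne_eq, mul_eq_zero, not_or]
    constructor
    · exact fun h => h.2
    · exact fun h => ⟨ne_of_gt ht, h⟩
  have hsupp_v : (univ.filter (fun j => v' j ≠ 0)) = (univ.filter (fun j => v j ≠ 0)) := by
    refine Finset.filter_congr fun j _ => ?_
    simp only [hv'def, Pi.smul_apply, smul_eq_mul, ne_eq, mul_eq_zero, not_or]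
    constructor
    · exact fun h => h.2
    · exact fun h => ⟨inv_ne_zero (ne_of_gt ht), h⟩
  have hdisj' : ∀ j, u' j = 0 ∨ v' j = 0 := by
    intro j
    rcases hdisj j with h | h
    · exact Or.inl (by simp [hu'def, h])
    · exact Or.inr (by simp [hv'def, h])
  have hcard' : (univ.filter (fun j => u' j ≠ 0)).card
      + (univ.filter (fun j => v' j ≠ 0)).card ≤ 2*k := by
    rw [hsupp_u, hsupp_v]; exact hcard
  have hmain := ro_aux Φ hRIP u' v' hcard' hdisj'
  have e1 : ∑ j, u' j ^ 2 = Real.sqrt b * Real.sqrt a := by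
    calc ∑ j, u' j ^ 2 = t^2 * ∑ j, u j ^ 2 := by
          rw [Finset.mul_sum]
          exact Finset.sum_congr rfl fun j _ => by
            simp [hu'def, Pi.smul_apply, smul_eq_mul, mul_pow]
      _ = (Real.sqrt b / Real.sqrt a) * a := by rw [ht2]
      _ = Real.sqrt b * Real.sqrt a := by
          rw [div_mul_eq_mul_div, mul_div_assoc, Real.div_sqrt]
  have e2 : ∑ j, v' j ^ 2 = Real.sqrt a * Real.sqrt b := by
    calc ∑ j, v' j ^ 2 = (t⁻¹)^2 * ∑ j, v j ^ 2 := by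
          rw [Finset.mul_sum]
          exact Finset.sum_congr rfl fun j _ => by
            simp [hv'def, Pi.smul_apply, smul_eq_mul, mul_pow]
      _ = (Real.sqrt a / Real.sqrt b) * b := by rw [hti2]
      _ = Real.sqrt a * Real.sqrt b := by
          rw [div_mul_eq_mul_div, mul_div_assoc, Real.div_sqrt]
  have eip : ∑ i, Φ.mulVec u' i * Φ.mulVec v' i = ∑ i, Φ.mulVec u i * Φ.mulVec v i := by
    have hsu : Φ.mulVec u' = t • Φ.mulVec u := by rw [hu'def, Matrix.mulVec_smul]
    have hsv : Φ.mulVec v' = t⁻¹ • Φ.mulVec v := by rw [hv'def, Matrix.mulVec_smul]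
    rw [hsu, hsv]
    refine Finset.sum_congr rfl fun i _ => ?_
    simp only [Pi.smul_apply, smul_eq_mul]
    field_simp
  rw [eip, e1, e2] at hmain
  have hena : en u = Real.sqrt a := rfl
  have henb : en v = Real.sqrt b := rfl
  calc |∑ i, Φ.mulVec u i * Φ.mulVec v i|
      ≤ δ * (Real.sqrt b * Real.sqrt a + Real.sqrt a * Real.sqrt b) / 2 := hmain
    _ = δ * (en u * en v) := by rw [hena, henb]; ring


lemma sum_res (S : Finset (Fin N)) (f : Fin N → ℝ) :
    ∑ j, res S f j = ∑ j ∈ S, f j := by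
  rw [← Finset.sum_filter_add_sum_filter_not univ (fun j => j ∈ S)]
  have h1 : ∀ j ∈ univ.filter (fun j => j ∈ S), res S f j = f j := by
    intro j hj; simp only [mem_filter] at hj; simp [res, hj.2]
  have h2 : ∀ j ∈ univ.filter (fun j => ¬ j ∈ S), res S f j = 0 := by
    intro j hj; simp only [mem_filter] at hj; simp [res, hj.2]
  rw [Finset.sum_congr rfl h1, Finset.sum_congr rfl h2, Finset.sum_const_zero, add_zero,
    Finset.filter_mem_eq_inter, Finset.univ_inter]

lemma ip_mulVec_listsum {n : ℕ} (Φ : Matrix (Fin n) (Fin N) ℝ) (a : Fin N → ℝ)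
    (L : List (Fin N → ℝ)) :
    ∑ i, Φ.mulVec a i * Φ.mulVec L.sum i
      = (L.map (fun v => ∑ i, Φ.mulVec a i * Φ.mulVec v i)).sum := by
  induction L with
  | nil => simp [Matrix.mulVec_zero]
  | cons b L ih =>
      simp only [List.sum_cons, List.map_cons, Matrix.mulVec_add, Pi.add_apply, mul_add,
        Finset.sum_add_distrib, ih]

lemma abs_map_sum_le {α : Type*} (L : List α) (F G : α → ℝ)
    (hFG : ∀ a ∈ L, |F a| ≤ G a) : |(L.map F).sum| ≤ (L.map G).sum := by
  induction L with
  | nil => simp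
  | cons a L ih =>
      simp only [List.map_cons, List.sum_cons]
      calc |F a + (L.map F).sum| ≤ |F a| + |(L.map F).sum| := abs_add_le _ _
        _ ≤ G a + (L.map G).sum := add_le_add (hFG a (List.mem_cons_self))
            (ih fun a ha => hFG a (List.mem_cons_of_mem _ ha))

lemma map_mul_sum {α : Type*} (L : List α) (c : ℝ) (f : α → ℝ) :
    (L.map (fun a => c * f a)).sum = c * (L.map f).sum := by
  induction L with
  | nil => simp
  | cons a L ih => simp [List.map_cons, List.sum_cons, ih, mul_add]

lemma listsum_nonneg {α : Type*} (L : List α) (f : α → ℝ) (hf : ∀ a ∈ L, 0 ≤ f a) :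
    0 ≤ (L.map f).sum := by
  induction L with
  | nil => simp
  | cons a L ih =>
      simp only [List.map_cons, List.sum_cons]
      have := hf a (List.mem_cons_self)
      have := ih fun a ha => hf a (List.mem_cons_of_mem _ ha)
      linarith

end Stmt13


set_option maxHeartbeats 2000000 in
open Stmt13 in
theorem stmt13 (δ : ℝ) (hδ0 : 0 < δ) (hδ1 : δ < Real.sqrt 2 - 1) :
    ∃ C₀ : ℝ, ∀ (n N k : ℕ), 1 ≤ k →
      ∀ Φ : Matrix (Fin n) (Fin N) ℝ,
      (∀ w : Fin N → ℝ, (Finset.univ.filter (fun j => w j ≠ 0)).card ≤ 2 * k →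
        (1 - δ) * ∑ j, (w j) ^ 2 ≤ ∑ i, (Φ.mulVec w i) ^ 2 ∧
        ∑ i, (Φ.mulVec w i) ^ 2 ≤ (1 + δ) * ∑ j, (w j) ^ 2) →
      ∀ x : Fin N → ℝ,
      -- `T` is a set of `k` coordinates of largest absolute value, so that
      -- `x_{(k)} = fun j => if j ∈ T then x j else 0`
      ∀ T : Finset (Fin N), T.card = min k N →
        (∀ i ∈ T, ∀ j ∉ T, |x j| ≤ |x i|) →
      ∀ xstar : Fin N → ℝ,
        Φ.mulVec xstar = Φ.mulVec x →
        (∀ z : Fin N → ℝ, Φ.mulVec z = Φ.mulVec x → ∑ j, |xstar j| ≤ ∑ j, |z j|) →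
        (∑ j, |xstar j - x j|
            ≤ C₀ * ∑ j, |x j - (if j ∈ T then x j else 0)|) ∧
        Real.sqrt (∑ j, (xstar j - x j) ^ 2)
            ≤ C₀ * (Real.sqrt k)⁻¹ * ∑ j, |x j - (if j ∈ T then x j else 0)| := by
  have hs2 : Real.sqrt 2 * Real.sqrt 2 = 2 := Real.mul_self_sqrt (by norm_num)
  have hs2pos : (0:ℝ) < Real.sqrt 2 := Real.sqrt_pos.mpr (by norm_num)
  have hδlt1 : δ < 1 := by linarith [hδ1, sq_nonneg (Real.sqrt 2 - 1), hs2]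
  have h1δ : (0:ℝ) < 1 - δ := by linarith
  set ρ : ℝ := Real.sqrt 2 * δ / (1 - δ) with hρdef
  have hρ0 : 0 ≤ ρ := by positivity
  have hρnum : Real.sqrt 2 * δ < 1 - δ := by
    have hmul := mul_lt_mul_of_pos_right hδ1 (show (0:ℝ) < Real.sqrt 2 + 1 by positivity)
    nlinarith [hmul, hs2]
  have hρ1 : ρ < 1 := by rw [hρdef, div_lt_one h1δ]; exact hρnum
  have h1ρ : (0:ℝ) < 1 - ρ := by linarith
  set c : ℝ := 2 * ρ / (1 - ρ) with hcdef
  have hc0 : 0 ≤ c := by positivity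
  refine ⟨2 * c + 2, ?_⟩
  intro n N k hk Φ hRIP x T hTcard hTtop xstar hfeas hmin
  have hC₀0 : (0:ℝ) ≤ 2 * c + 2 := by linarith
  set h : Fin N → ℝ := fun j => xstar j - x j with hhdef
  have hh : Φ.mulVec h = 0 := by
    have hse : h = xstar - x := rfl
    rw [hse, Matrix.mulVec_sub, hfeas, sub_self]
  set e : ℝ := ∑ j ∈ Tᶜ, |x j| with hedef
  have he0 : 0 ≤ e := Finset.sum_nonneg fun _ _ => abs_nonneg _
  have he_goal : ∑ j, |x j - (if j ∈ T then x j else 0)| = e := by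
    rw [hedef, ← Finset.sum_filter_add_sum_filter_not univ (fun j => j ∈ T)]
    have h1 : ∀ j ∈ univ.filter (fun j => j ∈ T),
        |x j - (if j ∈ T then x j else 0)| = 0 := fun j hj => by
      simp only [mem_filter] at hj; simp [hj.2]
    have h2 : ∀ j ∈ univ.filter (fun j => ¬ j ∈ T),
        |x j - (if j ∈ T then x j else 0)| = |x j| := fun j hj => by
      simp only [mem_filter] at hj; simp [hj.2]
    rw [Finset.sum_congr rfl h1, Finset.sum_congr rfl h2, Finset.sum_const_zero, zero_add]
    congr 1
    ext j; simp
  set a0 : ℝ := ∑ j ∈ T, |h j| with ha0def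
  set SA : ℝ := ∑ j ∈ Tᶜ, |h j| with hSAdef
  have ha00 : 0 ≤ a0 := Finset.sum_nonneg fun _ _ => abs_nonneg _
  have hSA0 : 0 ≤ SA := Finset.sum_nonneg fun _ _ => abs_nonneg _
  -- the cone constraint coming from ℓ¹ minimality
  have hcone : SA ≤ a0 + 2 * e := by
    have hxs := hmin x rfl
    have hsx : ∑ j, |xstar j| = ∑ j ∈ T, |xstar j| + ∑ j ∈ Tᶜ, |xstar j| :=
      (Finset.sum_add_sum_compl T _).symm
    have hsx2 : ∑ j, |x j| = (∑ j ∈ T, |x j|) + e :=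
      (Finset.sum_add_sum_compl T _).symm
    have hT1 : ∑ j ∈ T, (|x j| - |h j|) ≤ ∑ j ∈ T, |xstar j| := by
      refine Finset.sum_le_sum fun j _ => ?_
      have hx : xstar j = x j + h j := by simp [hhdef]
      rw [hx]
      have habs := abs_sub_abs_le_abs_sub (x j) (-(h j))
      rw [abs_neg, sub_neg_eq_add] at habs
      linarith
    have hT2 : ∑ j ∈ Tᶜ, (|h j| - |x j|) ≤ ∑ j ∈ Tᶜ, |xstar j| := by
      refine Finset.sum_le_sum fun j _ => ?_
      have hx : xstar j = x j + h j := by simp [hhdef]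
      rw [hx, add_comm (x j) (h j)]
      have habs := abs_sub_abs_le_abs_sub (h j) (-(x j))
      rw [abs_neg, sub_neg_eq_add] at habs
      linarith
    rw [Finset.sum_sub_distrib] at hT1 hT2
    linarith [hT1, hT2, ha0def, hSAdef, hedef]
  by_cases hTc : Tᶜ = (∅ : Finset (Fin N))
  · -- degenerate case : `T` is everything, hence `h = 0`
    have hTuniv : T = univ := by
      rw [← compl_compl T, hTc, Finset.compl_empty]
    have hNk : N ≤ k := by
      have hcu : (univ : Finset (Fin N)).card = N := by
        rw [Finset.card_univ, Fintype.card_fin]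
      rw [hTuniv, hcu] at hTcard
      omega
    have hsupp : (univ.filter (fun j => h j ≠ 0)).card ≤ 2 * k := by
      calc (univ.filter (fun j => h j ≠ 0)).card
          ≤ (univ : Finset (Fin N)).card := Finset.card_filter_le _ _
        _ = N := by rw [Finset.card_univ, Fintype.card_fin]
        _ ≤ 2 * k := by omega
    have h0 := (hRIP h hsupp).1
    rw [hh] at h0
    have h0' : (1 - δ) * ∑ j, h j ^ 2 ≤ 0 := by simpa using h0
    have hsum0 : ∑ j, h j ^ 2 ≤ 0 := by
      nlinarith [h0', h1δ, Finset.sum_nonneg (fun j (_ : j ∈ univ) => sq_nonneg (h j))]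
    have hsum : ∑ j, h j ^ 2 = 0 :=
      le_antisymm hsum0 (Finset.sum_nonneg fun _ _ => sq_nonneg _)
    have hz : ∀ j, h j = 0 := fun j => pow_eq_zero_iff two_ne_zero |>.mp
      ((Finset.sum_eq_zero_iff_of_nonneg (fun j _ => sq_nonneg (h j))).mp hsum j (mem_univ j))
    constructor
    · have hL : ∑ j, |xstar j - x j| = 0 := Finset.sum_eq_zero fun j _ => by
        rw [show xstar j - x j = h j from rfl, hz j, abs_zero]
      rw [hL, he_goal]
      exact mul_nonneg hC₀0 he0
    · have hL : ∑ j, (xstar j - x j) ^ 2 = 0 := Finset.sum_eq_zero fun j _ => by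
        rw [show xstar j - x j = h j from rfl, hz j]; ring
      rw [hL, Real.sqrt_zero, he_goal]
      have hinv : (0:ℝ) ≤ (Real.sqrt k)⁻¹ := by positivity
      exact mul_nonneg (mul_nonneg hC₀0 hinv) he0
  · -- main case
    have hAne : (Tᶜ : Finset (Fin N)).Nonempty := Finset.nonempty_iff_ne_empty.mpr hTc
    have hk0 : (0:ℝ) < (k:ℝ) := by exact_mod_cast hk
    set sk := Real.sqrt (k:ℝ) with hskdef
    have hsk : 0 < sk := Real.sqrt_pos.mpr hk0
    have hsk2 : sk ^ 2 = (k:ℝ) := Real.sq_sqrt (le_of_lt hk0)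
    have hski : sk * sk⁻¹ = 1 := mul_inv_cancel₀ (ne_of_gt hsk)
    obtain ⟨L, hLsub, hLdisj, hLcov, hLtail⟩ := chunks h k hk Tᶜ.card Tᶜ le_rfl
    rcases L with _ | ⟨T₁, rest⟩
    · exfalso
      obtain ⟨j, hj⟩ := hAne
      obtain ⟨B, hB, _⟩ := hLcov j hj
      exact absurd hB (List.not_mem_nil)
    simp only [List.tail_cons] at hLtail
    set u₀ : Fin N → ℝ := res T h with hu₀def
    set u₁ : Fin N → ℝ := res T₁ h with hu₁def
    set rsum : Fin N → ℝ := (rest.map (fun B => res B h)).sum with hrsumdef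
    have hfold : (T₁ :: rest).foldr (· ∪ ·) ∅ = Tᶜ := by
      ext j
      rw [mem_foldr_union]
      constructor
      · rintro ⟨B, hB, hjB⟩; exact (hLsub B hB).1 hjB
      · intro hj; exact hLcov j hj
    have hresA : res Tᶜ h = u₁ + rsum := by
      rw [← hfold, res_foldr _ hLdisj]
      simp [List.map_cons, List.sum_cons, hu₁def, hrsumdef]
    have hdecomp : h = (u₀ + u₁) + rsum := by
      conv_lhs => rw [← res_add_res_compl T h]
      rw [hresA, hu₀def, add_assoc]
    have hTk : T.card ≤ k := by rw [hTcard]; exact min_le_left _ _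
    have hT₁sub : T₁ ⊆ Tᶜ := (hLsub T₁ (List.mem_cons_self)).1
    have hT₁k : T₁.card ≤ k := (hLsub T₁ (List.mem_cons_self)).2
    have hrestsub : ∀ B ∈ rest, B ⊆ Tᶜ := fun B hB => (hLsub B (List.mem_cons_of_mem _ hB)).1
    have hrestk : ∀ B ∈ rest, B.card ≤ k := fun B hB => (hLsub B (List.mem_cons_of_mem _ hB)).2
    have hdisjT₁ : ∀ B ∈ rest, Disjoint T₁ B := (List.pairwise_cons.mp hLdisj).1
    have hsuppu : (univ.filter (fun j => (u₀ + u₁) j ≠ 0)).card ≤ 2 * k := by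
      have hsub : (univ.filter (fun j => (u₀ + u₁) j ≠ 0)) ⊆ T ∪ T₁ := by
        intro j hj
        simp only [mem_filter, mem_univ, true_and, Pi.add_apply] at hj
        rw [mem_union]
        by_contra hcon
        push_neg at hcon
        have h1 : u₀ j = 0 := by simp [hu₀def, res, hcon.1]
        have h2 : u₁ j = 0 := by simp [hu₁def, res, hcon.2]
        rw [h1, h2] at hj; simp at hj
      calc (univ.filter (fun j => (u₀ + u₁) j ≠ 0)).card
          ≤ (T ∪ T₁).card := card_le_card hsub
        _ ≤ T.card + T₁.card := card_union_le _ _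
        _ ≤ 2 * k := by omega
    have hsq_split : en (u₀ + u₁) ^ 2 = en u₀ ^ 2 + en u₁ ^ 2 := by
      rw [sq_en, sq_en, sq_en, ← Finset.sum_add_distrib]
      refine Finset.sum_congr rfl fun j _ => ?_
      have hor : u₀ j = 0 ∨ u₁ j = 0 := by
        by_cases hj : j ∈ T
        · right
          have hnot : j ∉ T₁ := fun hmem => (Finset.mem_compl.mp (hT₁sub hmem)) hj
          simp [hu₁def, res, hnot]
        · left; simp [hu₀def, res, hj]
      rcases hor with h' | h' <;> simp [Pi.add_apply, h']
    have hu₀le : en u₀ ≤ en (u₀ + u₁) := by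
      refine le_of_sq_le_sq _ _ (en_nonneg _) (en_nonneg _) ?_
      rw [hsq_split]; linarith [sq_nonneg (en u₁)]
    have hu₀u₁ : en u₀ + en u₁ ≤ Real.sqrt 2 * en (u₀ + u₁) := by
      refine le_of_sq_le_sq _ _ (add_nonneg (en_nonneg _) (en_nonneg _))
        (mul_nonneg (le_of_lt hs2pos) (en_nonneg _)) ?_
      rw [mul_pow, show (Real.sqrt 2) ^ 2 = 2 from Real.sq_sqrt (by norm_num), hsq_split]
      linarith [sq_nonneg (en u₀ - en u₁)]
    set S : ℝ := (rest.map (fun B => en (res B h))).sum with hSdef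
    have hS0 : 0 ≤ S := by
      rw [hSdef]; exact listsum_nonneg _ _ fun B _ => en_nonneg _
    have hStail : S ≤ sk⁻¹ * SA := by
      rw [hSdef, hskdef, hSAdef]; exact hLtail
    have hmv0 : Φ.mulVec ((u₀ + u₁) + rsum) = 0 := by rw [← hdecomp]; exact hh
    have hmvr : Φ.mulVec rsum = - Φ.mulVec (u₀ + u₁) := by
      rw [Matrix.mulVec_add] at hmv0
      exact eq_neg_of_add_eq_zero_right hmv0
    have hQu : ∑ i, Φ.mulVec (u₀ + u₁) i * Φ.mulVec rsum i
        = - ∑ i, (Φ.mulVec (u₀ + u₁) i) ^ 2 := by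
      rw [hmvr]
      have hterm : ∀ i, Φ.mulVec (u₀ + u₁) i * (- Φ.mulVec (u₀ + u₁)) i
          = -((Φ.mulVec (u₀ + u₁) i) ^ 2) := fun i => by
        simp only [Pi.neg_apply]; ring
      rw [Finset.sum_congr rfl fun i _ => hterm i]
      simp
    have hexp : ∑ i, Φ.mulVec (u₀ + u₁) i * Φ.mulVec rsum i
        = (rest.map (fun B => ∑ i, Φ.mulVec (u₀ + u₁) i * Φ.mulVec (res B h) i)).sum := by
      rw [hrsumdef, ip_mulVec_listsum, List.map_map]
      rfl
    have hblock : ∀ B ∈ rest, |∑ i, Φ.mulVec (u₀ + u₁) i * Φ.mulVec (res B h) i|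
        ≤ δ * (en u₀ + en u₁) * en (res B h) := by
      intro B hB
      have hsplitip : ∑ i, Φ.mulVec (u₀ + u₁) i * Φ.mulVec (res B h) i
          = (∑ i, Φ.mulVec u₀ i * Φ.mulVec (res B h) i)
            + ∑ i, Φ.mulVec u₁ i * Φ.mulVec (res B h) i := by
        rw [Matrix.mulVec_add]
        simp only [Pi.add_apply, add_mul]
        exact Finset.sum_add_distrib
      have hb0 : |∑ i, Φ.mulVec u₀ i * Φ.mulVec (res B h) i|
          ≤ δ * (en u₀ * en (res B h)) := by
        refine ro Φ hRIP u₀ (res B h) ?_ ?_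
        · have hc1 : (univ.filter (fun j => u₀ j ≠ 0)).card ≤ T.card := by
            rw [hu₀def]; exact card_le_card (supp_res_subset T h)
          have hc2 : (univ.filter (fun j => res B h j ≠ 0)).card ≤ B.card :=
            card_le_card (supp_res_subset B h)
          have := hrestk B hB
          omega
        · intro j
          by_cases hj : j ∈ T
          · right
            have hnot : j ∉ B := fun hmem => (Finset.mem_compl.mp (hrestsub B hB hmem)) hj
            simp [res, hnot]
          · left; simp [hu₀def, res, hj]
      have hb1 : |∑ i, Φ.mulVec u₁ i * Φ.mulVec (res B h) i|
          ≤ δ * (en u₁ * en (res B h)) := by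
        refine ro Φ hRIP u₁ (res B h) ?_ ?_
        · have hc1 : (univ.filter (fun j => u₁ j ≠ 0)).card ≤ T₁.card := by
            rw [hu₁def]; exact card_le_card (supp_res_subset T₁ h)
          have hc2 : (univ.filter (fun j => res B h j ≠ 0)).card ≤ B.card :=
            card_le_card (supp_res_subset B h)
          have := hrestk B hB
          omega
        · intro j
          by_cases hj : j ∈ T₁
          · right
            have hnot : j ∉ B := Finset.disjoint_left.mp (hdisjT₁ B hB) hj
            simp [res, hnot]
          · left; simp [hu₁def, res, hj]
      calc |∑ i, Φ.mulVec (u₀ + u₁) i * Φ.mulVec (res B h) i|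
          ≤ |∑ i, Φ.mulVec u₀ i * Φ.mulVec (res B h) i|
            + |∑ i, Φ.mulVec u₁ i * Φ.mulVec (res B h) i| := by
            rw [hsplitip]; exact abs_add_le _ _
        _ ≤ δ * (en u₀ * en (res B h)) + δ * (en u₁ * en (res B h)) := add_le_add hb0 hb1
        _ = δ * (en u₀ + en u₁) * en (res B h) := by ring
    have habs : |∑ i, Φ.mulVec (u₀ + u₁) i * Φ.mulVec rsum i|
        ≤ δ * (en u₀ + en u₁) * S := by
      rw [hexp]
      calc |(rest.map (fun B => ∑ i, Φ.mulVec (u₀ + u₁) i * Φ.mulVec (res B h) i)).sum|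
          ≤ (rest.map (fun B => δ * (en u₀ + en u₁) * en (res B h))).sum :=
            abs_map_sum_le _ _ _ hblock
        _ = δ * (en u₀ + en u₁) * S := by rw [hSdef]; exact map_mul_sum _ _ _
    have hRIPu := (hRIP (u₀ + u₁) hsuppu).1
    have hkey : (1 - δ) * en (u₀ + u₁) ^ 2 ≤ δ * (Real.sqrt 2 * en (u₀ + u₁)) * S := by
      calc (1 - δ) * en (u₀ + u₁) ^ 2
          = (1 - δ) * ∑ j, ((u₀ + u₁) j) ^ 2 := by rw [sq_en]
        _ ≤ ∑ i, (Φ.mulVec (u₀ + u₁) i) ^ 2 := hRIPu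
        _ = - ∑ i, Φ.mulVec (u₀ + u₁) i * Φ.mulVec rsum i := by linarith [hQu]
        _ ≤ |∑ i, Φ.mulVec (u₀ + u₁) i * Φ.mulVec rsum i| := neg_le_abs _
        _ ≤ δ * (en u₀ + en u₁) * S := habs
        _ ≤ δ * (Real.sqrt 2 * en (u₀ + u₁)) * S := by
            have hmm : δ * (en u₀ + en u₁) ≤ δ * (Real.sqrt 2 * en (u₀ + u₁)) :=
              mul_le_mul_of_nonneg_left hu₀u₁ (le_of_lt hδ0)
            exact mul_le_mul_of_nonneg_right hmm hS0
    have henu : en (u₀ + u₁) ≤ ρ * S := by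
      rcases eq_or_lt_of_le (en_nonneg (u₀ + u₁)) with h0 | hpos
      · rw [← h0]; exact mul_nonneg hρ0 hS0
      · have h' : (1 - δ) * en (u₀ + u₁) ≤ Real.sqrt 2 * δ * S := by
          nlinarith [hkey, hpos]
        have h2 : en (u₀ + u₁) ≤ (Real.sqrt 2 * δ * S) / (1 - δ) := by
          rw [le_div_iff₀ h1δ]; linarith [h']
        calc en (u₀ + u₁) ≤ (Real.sqrt 2 * δ * S) / (1 - δ) := h2
          _ = ρ * S := by rw [hρdef]; ring
    have ha0b : a0 ≤ sk * en u₀ := by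
      have hcs : a0 ^ 2 ≤ (T.card : ℝ) * ∑ j ∈ T, |h j| ^ 2 := by
        rw [ha0def]; exact sq_sum_le_card_mul_sum_sq
      have h2 : ∑ j ∈ T, |h j| ^ 2 = en u₀ ^ 2 := by
        rw [hu₀def, sq_en, sum_sq_res]
        exact Finset.sum_congr rfl fun j _ => (sq_abs _)
      refine le_of_sq_le_sq _ _ ha00 (mul_nonneg (le_of_lt hsk) (en_nonneg _)) ?_
      rw [mul_pow, hsk2]
      calc a0 ^ 2 ≤ (T.card : ℝ) * ∑ j ∈ T, |h j| ^ 2 := hcs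
        _ = (T.card : ℝ) * en u₀ ^ 2 := by rw [h2]
        _ ≤ (k : ℝ) * en u₀ ^ 2 := by
            have hcast : (T.card : ℝ) ≤ (k : ℝ) := by exact_mod_cast hTk
            exact mul_le_mul_of_nonneg_right hcast (sq_nonneg _)
    have ha0u : a0 ≤ sk * en (u₀ + u₁) :=
      le_trans ha0b (mul_le_mul_of_nonneg_left hu₀le (le_of_lt hsk))
    have hSb : S ≤ en (u₀ + u₁) + 2 * e * sk⁻¹ := by
      have h2 : SA ≤ sk * en (u₀ + u₁) + 2 * e := by linarith [hcone, ha0u]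
      calc S ≤ sk⁻¹ * SA := hStail
        _ ≤ sk⁻¹ * (sk * en (u₀ + u₁) + 2 * e) :=
            mul_le_mul_of_nonneg_left h2 (by positivity)
        _ = (sk * sk⁻¹) * en (u₀ + u₁) + 2 * e * sk⁻¹ := by ring
        _ = en (u₀ + u₁) + 2 * e * sk⁻¹ := by rw [hski, one_mul]
    have henuf : en (u₀ + u₁) ≤ c * e * sk⁻¹ := by
      have h1 : en (u₀ + u₁) ≤ ρ * en (u₀ + u₁) + ρ * (2 * e * sk⁻¹) := by
        calc en (u₀ + u₁) ≤ ρ * S := henu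
          _ ≤ ρ * (en (u₀ + u₁) + 2 * e * sk⁻¹) := mul_le_mul_of_nonneg_left hSb hρ0
          _ = ρ * en (u₀ + u₁) + ρ * (2 * e * sk⁻¹) := by ring
      have h2 : (1 - ρ) * en (u₀ + u₁) ≤ 2 * ρ * (e * sk⁻¹) := by linarith [h1]
      have h3 : en (u₀ + u₁) ≤ (2 * ρ * (e * sk⁻¹)) / (1 - ρ) := by
        rw [le_div_iff₀ h1ρ]; linarith [h2]
      calc en (u₀ + u₁) ≤ (2 * ρ * (e * sk⁻¹)) / (1 - ρ) := h3
        _ = c * e * sk⁻¹ := by rw [hcdef]; ring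
    have hrle : en rsum ≤ S := by
      rw [hrsumdef, hSdef]
      calc en (rest.map (fun B => res B h)).sum
          ≤ ((rest.map (fun B => res B h)).map en).sum := en_listsum_le _
        _ = (rest.map (fun B => en (res B h))).sum := by rw [List.map_map]; rfl
    have henh : en h ≤ 2 * en (u₀ + u₁) + 2 * e * sk⁻¹ := by
      calc en h = en ((u₀ + u₁) + rsum) := by rw [← hdecomp]
        _ ≤ en (u₀ + u₁) + en rsum := en_add_le _ _
        _ ≤ en (u₀ + u₁) + S := by linarith [hrle]
        _ ≤ en (u₀ + u₁) + (en (u₀ + u₁) + 2 * e * sk⁻¹) := by linarith [hSb]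
        _ = 2 * en (u₀ + u₁) + 2 * e * sk⁻¹ := by ring
    constructor
    · rw [he_goal]
      have hL1 : ∑ j, |xstar j - x j| = a0 + SA := by
        rw [ha0def, hSAdef, Finset.sum_add_sum_compl T (fun j => |h j|)]
      rw [hL1]
      have ha0e : a0 ≤ c * e := by
        calc a0 ≤ sk * en (u₀ + u₁) := ha0u
          _ ≤ sk * (c * e * sk⁻¹) := mul_le_mul_of_nonneg_left henuf (le_of_lt hsk)
          _ = c * e * (sk * sk⁻¹) := by ring
          _ = c * e := by rw [hski, mul_one]
      calc a0 + SA ≤ a0 + (a0 + 2 * e) := by linarith [hcone]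
        _ ≤ c * e + (c * e + 2 * e) := by linarith [ha0e]
        _ = (2 * c + 2) * e := by ring
    · rw [he_goal]
      have hL2 : Real.sqrt (∑ j, (xstar j - x j) ^ 2) = en h := rfl
      rw [hL2]
      calc en h ≤ 2 * en (u₀ + u₁) + 2 * e * sk⁻¹ := henh
        _ ≤ 2 * (c * e * sk⁻¹) + 2 * e * sk⁻¹ := by linarith [henuf]
        _ = (2 * c + 2) * sk⁻¹ * e := by ring
end
end

section
/- Let Φ be an n × N real matrix, k ≥ 1, and suppose there exists δ with 0 < δ < √2 − 1 such that (1−δ)·‖w‖₂² ≤ ‖Φw‖₂² ≤ (1+δ)·‖w‖₂² for every 2k-sparse vector w ∈ ℝ^N. Then there exist constants C₀ and C₁, depending only on δ, such that for every x ∈ ℝ^N, every ε ≥ 0, and every noise vector z ∈ ℝ^n with ‖z‖₂ ≤ ε, setting y = Φx + z, any vector x* satisfying ‖y − Φx*‖₂ ≤ ε and ‖x*‖₁ ≤ ‖w‖₁ for all w with ‖y − Φw‖₂ ≤ ε obeys ‖x* − x‖₂ ≤ C₀·k^{−1/2}·‖x − x_{(k)}‖₁ + C₁·ε, where x_{(k)}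 is obtained from x by setting all but the k largest-magnitude entries to zero. -/
open Finset

lemma mycs {ι : Type*} (s : Finset ι) (f g : ι → ℝ) :
    ∑ i ∈ s, f i * g i ≤ Real.sqrt (∑ i ∈ s, f i ^ 2) * Real.sqrt (∑ i ∈ s, g i ^ 2) := by
  calc ∑ i ∈ s, f i * g i ≤ |∑ i ∈ s, f i * g i| := le_abs_self _
    _ = Real.sqrt ((∑ i ∈ s, f i * g i) ^ 2) := (Real.sqrt_sq_eq_abs _).symm
    _ ≤ Real.sqrt ((∑ i ∈ s, f i ^ 2) * ∑ i ∈ s, g i ^ 2) :=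
        Real.sqrt_le_sqrt (sum_mul_sq_le_sq_mul_sq s f g)
    _ = _ := Real.sqrt_mul (by positivity) _

lemma mymink {ι : Type*} (s : Finset ι) (f g : ι → ℝ) :
    Real.sqrt (∑ i ∈ s, (f i + g i) ^ 2)
      ≤ Real.sqrt (∑ i ∈ s, f i ^ 2) + Real.sqrt (∑ i ∈ s, g i ^ 2) := by
  set a := Real.sqrt (∑ i ∈ s, f i ^ 2) with ha
  set b := Real.sqrt (∑ i ∈ s, g i ^ 2) with hb
  have ha2 : a ^ 2 = ∑ i ∈ s, f i ^ 2 := Real.sq_sqrt (by positivity)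
  have hb2 : b ^ 2 = ∑ i ∈ s, g i ^ 2 := Real.sq_sqrt (by positivity)
  have hfg := mycs s f g
  have key : ∑ i ∈ s, (f i + g i) ^ 2 ≤ (a + b) ^ 2 := by
    have : ∑ i ∈ s, (f i + g i) ^ 2
        = ∑ i ∈ s, f i ^ 2 + 2 * ∑ i ∈ s, f i * g i + ∑ i ∈ s, g i ^ 2 := by
      simp only [mul_sum, ← sum_add_distrib]
      exact sum_congr rfl fun i _ => by ring
    linarith [hfg, Real.sqrt_nonneg (∑ i ∈ s, f i ^ 2), Real.sqrt_nonneg (∑ i ∈ s, g i ^ 2)]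
  calc Real.sqrt (∑ i ∈ s, (f i + g i) ^ 2) ≤ Real.sqrt ((a + b) ^ 2) := Real.sqrt_le_sqrt key
    _ = a + b := by
        rw [Real.sqrt_sq (by positivity)]

lemma sum_sq_expand {ι : Type*} [Fintype ι] (c d : ℝ) (F G : ι → ℝ) :
    ∑ i, (c * F i + d * G i) ^ 2
      = c ^ 2 * ∑ i, F i ^ 2 + 2 * c * d * ∑ i, F i * G i + d ^ 2 * ∑ i, G i ^ 2 := by
  simp only [mul_sum, ← sum_add_distrib]
  exact sum_congr rfl fun i _ => by ring

lemma rip_inner {n N k : ℕ} {δ : ℝ} (Φ : Matrix (Fin n) (Fin N) ℝ)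
    (hRIP : ∀ w : Fin N → ℝ, (Finset.univ.filter (fun j => w j ≠ 0)).card ≤ 2 * k →
      (1 - δ) * ∑ j, (w j) ^ 2 ≤ ∑ i, (Φ.mulVec w i) ^ 2 ∧
      ∑ i, (Φ.mulVec w i) ^ 2 ≤ (1 + δ) * ∑ j, (w j) ^ 2)
    (u v : Fin N → ℝ) (U V : Finset (Fin N))
    (hu : ∀ i, i ∉ U → u i = 0) (hv : ∀ i, i ∉ V → v i = 0)
    (hUV : Disjoint U V) (hcard : U.card + V.card ≤ 2 * k) :
    ∑ i, (Φ.mulVec u i) * (Φ.mulVec v i)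
      ≤ δ * Real.sqrt (∑ j, (u j) ^ 2) * Real.sqrt (∑ j, (v j) ^ 2) := by
  set α := Real.sqrt (∑ j, (u j) ^ 2) with hα
  set β := Real.sqrt (∑ j, (v j) ^ 2) with hβ
  have hα0 : 0 ≤ α := Real.sqrt_nonneg _
  have hβ0 : 0 ≤ β := Real.sqrt_nonneg _
  have hα2 : α ^ 2 = ∑ j, (u j) ^ 2 := Real.sq_sqrt (by positivity)
  have hβ2 : β ^ 2 = ∑ j, (v j) ^ 2 := Real.sq_sqrt (by positivity)
  rcases eq_or_lt_of_le hα0 with hα0' | hαpos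
  · have hu0 : u = 0 := by
      funext j
      have h0 : ∑ j, (u j) ^ 2 = 0 := by rw [← hα2, ← hα0']; ring
      have h1 := (Finset.sum_eq_zero_iff_of_nonneg (fun i _ => sq_nonneg (u i))).mp h0 j (mem_univ j)
      simpa using pow_eq_zero_iff two_ne_zero |>.mp h1
    have hmv : Φ.mulVec u = 0 := by rw [hu0, Matrix.mulVec_zero]
    simp only [hmv, Pi.zero_apply, zero_mul, Finset.sum_const_zero]
    rw [← hα0']
    simp
  rcases eq_or_lt_of_le hβ0 with hβ0' | hβpos
  · have hv0 : v = 0 := by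
      funext j
      have h0 : ∑ j, (v j) ^ 2 = 0 := by rw [← hβ2, ← hβ0']; ring
      have h1 := (Finset.sum_eq_zero_iff_of_nonneg (fun i _ => sq_nonneg (v i))).mp h0 j (mem_univ j)
      simpa using pow_eq_zero_iff two_ne_zero |>.mp h1
    have hmv : Φ.mulVec v = 0 := by rw [hv0, Matrix.mulVec_zero]
    simp only [hmv, Pi.zero_apply, mul_zero, Finset.sum_const_zero]
    rw [← hβ0']
    simp
  have hsupp : ∀ (c d : ℝ),
      (Finset.univ.filter (fun j => (c • u + d • v) j ≠ 0)).card ≤ 2 * k := by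
    intro c d
    refine le_trans (le_trans (Finset.card_le_card ?_) (Finset.card_union_le U V)) hcard
    intro j hj
    simp only [mem_filter, Pi.add_apply, Pi.smul_apply, smul_eq_mul, mem_union] at hj ⊢
    by_contra hc
    push_neg at hc
    exact hj.2 (by rw [hu j hc.1, hv j hc.2]; ring)
  have horth : ∑ j, u j * v j = 0 := by
    apply Finset.sum_eq_zero
    intro j _
    by_cases hjU : j ∈ U
    · rw [hv j (Finset.disjoint_left.mp hUV hjU)]; ring
    · rw [hu j hjU]; ring
  have expandN : ∀ (c d : ℝ), ∑ j, ((c • u + d • v) j) ^ 2 = c ^ 2 * α ^ 2 + d ^ 2 * β ^ 2 := by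
    intro c d
    have h1 : ∑ j, ((c • u + d • v) j) ^ 2
        = c ^ 2 * ∑ j, u j ^ 2 + 2 * c * d * ∑ j, u j * v j + d ^ 2 * ∑ j, v j ^ 2 := by
      simpa [Pi.add_apply, Pi.smul_apply, smul_eq_mul] using sum_sq_expand c d u v
    rw [h1, horth, hα2, hβ2]; ring
  have expandΦ : ∀ (c d : ℝ), ∑ i, (Φ.mulVec (c • u + d • v) i) ^ 2
      = c ^ 2 * ∑ i, (Φ.mulVec u i) ^ 2 + 2 * c * d * ∑ i, (Φ.mulVec u i) * (Φ.mulVec v i)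
        + d ^ 2 * ∑ i, (Φ.mulVec v i) ^ 2 := by
    intro c d
    have h1 : Φ.mulVec (c • u + d • v) = fun i => c * Φ.mulVec u i + d * Φ.mulVec v i := by
      funext i
      simp [Matrix.mulVec_add, Matrix.mulVec_smul]
    rw [h1]
    exact sum_sq_expand c d _ _
  have h₁ := (hRIP (β • u + α • v) (hsupp β α)).2
  have h₂ := (hRIP (β • u + (-α) • v) (hsupp β (-α))).1
  rw [expandΦ, expandN] at h₁ h₂
  set Q := ∑ i, (Φ.mulVec u i) * (Φ.mulVec v i) with hQ
  have key : Q * (α * β) ≤ (δ * α * β) * (α * β) := by linarith [h₁, h₂]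
  exact le_of_mul_le_mul_right key (mul_pos hαpos hβpos)

lemma blocks_cover_sum (b : ℕ → ℝ) (k : ℕ) :
    ∀ M : ℕ, ∑ i ∈ Finset.range M, ∑ p ∈ Finset.Ico (i * k) ((i + 1) * k), b p
      = ∑ p ∈ Finset.range (M * k), b p := by
  intro M
  induction M with
  | zero => simp
  | succ M ih =>
    rw [Finset.sum_range_succ, ih, Finset.range_eq_Ico, Finset.range_eq_Ico,
      ← Finset.sum_Ico_consecutive b (Nat.zero_le (M * k)) (Nat.mul_le_mul_right k (by omega : M ≤ M + 1))]

lemma sum_range_le_of_zero_tail (b : ℕ → ℝ) (L : ℕ) (hb0 : ∀ p, 0 ≤ b p)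
    (hz : ∀ p, L ≤ p → b p = 0) (A : ℕ) :
    ∑ p ∈ Finset.range A, b p ≤ ∑ p ∈ Finset.range L, b p := by
  rcases le_or_gt A L with hAL | hLA
  · exact Finset.sum_le_sum_of_subset_of_nonneg (Finset.range_mono hAL)
      (fun p _ _ => hb0 p)
  · rw [Finset.range_eq_Ico, Finset.range_eq_Ico,
      ← Finset.sum_Ico_consecutive b (Nat.zero_le L) (le_of_lt hLA)]
    have : ∑ p ∈ Finset.Ico L A, b p = 0 :=
      Finset.sum_eq_zero fun p hp => hz p (Finset.mem_Ico.mp hp).1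
    rw [this, add_zero]

lemma exists_blocks {N : ℕ} (h : Fin N → ℝ) (T : Finset (Fin N)) (k : ℕ) (hk : 1 ≤ k) :
    ∃ m : ℕ, ∃ S : ℕ → Finset (Fin N),
      (∀ j, S j ⊆ Tᶜ) ∧ (∀ j, (S j).card ≤ k) ∧
      (∀ i j, i ≠ j → Disjoint (S i) (S j)) ∧
      Tᶜ = (Finset.range m).biUnion S ∧
      ∑ j ∈ Finset.Ico 1 m, Real.sqrt (∑ i ∈ S j, (h i) ^ 2)
        ≤ (Real.sqrt k)⁻¹ * ∑ i ∈ Tᶜ, |h i| := by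
  classical
  set le : Fin N → Fin N → Bool := fun i j => decide (|h j| ≤ |h i|) with hle
  set l : List (Fin N) := Tᶜ.toList.mergeSort le with hl
  have hperm : l.Perm Tᶜ.toList := List.mergeSort_perm _ _
  have hnd : l.Nodup := hperm.nodup_iff.mpr (Finset.nodup_toList _)
  have hmem : ∀ a, a ∈ l ↔ a ∈ Tᶜ := fun a => hperm.mem_iff.trans (Finset.mem_toList)
  have hsorted : l.Pairwise (fun a b => le a b = true) := by
    apply List.pairwise_mergeSort
    · intro a b c h1 h2
      simp only [hle, decide_eq_true_eq] at *
      exact le_trans h2 h1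
    · intro a b
      simp only [hle, Bool.or_eq_true, decide_eq_true_eq]
      exact le_total _ _
  set L := l.length with hLdef
  have hLcard : L = Tᶜ.card := by rw [hLdef, hperm.length_eq, Finset.length_toList]
  rcases Nat.eq_zero_or_pos L with hL0 | hLpos
  · -- Tᶜ is empty
    have : Tᶜ = ∅ := Finset.card_eq_zero.mp (hL0 ▸ hLcard.symm)
    refine ⟨0, fun _ => ∅, by simp, by simp [Nat.zero_le, hk], by simp, by simp [this], ?_⟩
    simp [this]
  -- nonempty case
  set b : ℕ → ℝ := fun p => if hp : p < l.length then |h (l.get ⟨p, hp⟩)| else 0 with hb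
  set f : ℕ → Fin N := fun p => l.getD p (l.get ⟨0, hLpos⟩) with hf
  have hfval : ∀ p (hp : p < L), f p = l.get ⟨p, hp⟩ := by
    intro p hp
    simp only [hf]
    rw [List.getD_eq_getElem l _ hp]
    rfl
  have hb0 : ∀ p, 0 ≤ b p := by
    intro p
    simp only [hb]
    split <;> [exact abs_nonneg _; exact le_refl 0]
  have hbval : ∀ p (hp : p < L), b p = |h (f p)| := by
    intro p hp
    simp only [hb]
    rw [dif_pos (show p < l.length from hp), hfval p hp]
  have hbz : ∀ p, L ≤ p → b p = 0 := by
    intro p hp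
    simp only [hb]
    rw [dif_neg (show ¬ p < l.length from not_lt.mpr hp)]
  have hbanti : ∀ p q, p ≤ q → b q ≤ b p := by
    intro p q hpq
    rcases lt_or_ge q L with hq | hq
    · have hp : p < L := lt_of_le_of_lt hpq hq
      rcases eq_or_lt_of_le hpq with rfl | hlt
      · exact le_refl _
      · have hs : l.Pairwise (fun a b => le a b = true) := hsorted
        have := hs.rel_get_of_lt (a := ⟨p, hp⟩) (b := ⟨q, hq⟩) (Fin.mk_lt_mk.mpr hlt)
        simp only [hle, decide_eq_true_eq] at this
        rw [hbval p hp, hbval q hq, hfval p hp, hfval q hq]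
        exact this
    · rw [hbz q hq]
      exact hb0 p
  have hfinj : ∀ p q, p < L → q < L → f p = f q → p = q := by
    intro p q hp hq hfpq
    rw [hfval p hp, hfval q hq] at hfpq
    have h2 := (List.Nodup.get_inj_iff hnd).mp hfpq
    exact congrArg Fin.val h2
  have hfmem : ∀ p, p < L → f p ∈ Tᶜ := by
    intro p hp
    rw [← hmem, hfval p hp]
    exact List.get_mem l ⟨p, hp⟩
  set S : ℕ → Finset (Fin N) :=
    fun j => ((Finset.range L).filter fun p => j * k ≤ p ∧ p < (j + 1) * k).image f with hS
  have hmemS : ∀ j a, a ∈ S j ↔ ∃ p, (p < L ∧ j * k ≤ p ∧ p < (j + 1) * k) ∧ f p = a := by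
    intro j a
    simp [hS, Finset.mem_image, Finset.mem_filter, Finset.mem_range, and_assoc]
  have hsub : ∀ j, S j ⊆ Tᶜ := by
    intro j a ha
    obtain ⟨p, ⟨hp, _, _⟩, rfl⟩ := (hmemS j a).mp ha
    exact hfmem p hp
  have hcardS : ∀ j, (S j).card ≤ k := by
    intro j
    refine le_trans Finset.card_image_le (le_trans (Finset.card_le_card (t := Finset.Ico (j*k) ((j+1)*k)) ?_) ?_)
    · intro p hp
      rw [Finset.mem_filter] at hp
      exact Finset.mem_Ico.mpr hp.2
    · rw [Nat.card_Ico]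
      have : (j + 1) * k = j * k + k := by ring
      omega
  have hdisj : ∀ i j, i ≠ j → Disjoint (S i) (S j) := by
    intro i j hij
    rw [Finset.disjoint_left]
    intro a hai haj
    obtain ⟨p, ⟨hp, hp1, hp2⟩, rfl⟩ := (hmemS i a).mp hai
    obtain ⟨q, ⟨hq, hq1, hq2⟩, hfq⟩ := (hmemS j _).mp haj
    have hpq : q = p := hfinj q p hq hp hfq
    subst hpq
    rcases lt_or_gt_of_ne hij with hlt | hlt
    · have : (i + 1) * k ≤ j * k := Nat.mul_le_mul_right k (by omega)
      omega
    · have : (j + 1) * k ≤ i * k := Nat.mul_le_mul_right k (by omega)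
      omega
  have hcover : ∀ p, p < L → p ∈ (Finset.range L).filter
      (fun q => (p / k) * k ≤ q ∧ q < (p / k + 1) * k) := by
    intro p hp
    rw [Finset.mem_filter, Finset.mem_range]
    refine ⟨hp, Nat.div_mul_le_self p k, ?_⟩
    have h1 : p / k * k + p % k = p := by rw [Nat.mul_comm]; exact Nat.div_add_mod p k
    have h2 : p % k < k := Nat.mod_lt p (by omega)
    calc p = p / k * k + p % k := h1.symm
      _ < p / k * k + k := by omega
      _ = (p / k + 1) * k := by ring
  have hbiU : Tᶜ = (Finset.range L).biUnion S := by
    apply Finset.Subset.antisymm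
    · intro a ha
      rw [← hmem] at ha
      obtain ⟨⟨p, hp⟩, rfl⟩ := List.mem_iff_get.mp ha
      rw [Finset.mem_biUnion]
      refine ⟨p / k, Finset.mem_range.mpr (lt_of_le_of_lt (Nat.div_le_self p k) hp), ?_⟩
      rw [hmemS]
      refine ⟨p, ⟨hp, ?_, ?_⟩, (hfval p hp)⟩
      · exact Nat.div_mul_le_self p k
      · have := (Finset.mem_filter.mp (hcover p hp)).2
        exact this.2
    · intro a ha
      rw [Finset.mem_biUnion] at ha
      obtain ⟨j, _, haj⟩ := ha
      exact hsub j haj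
  -- sum over range L of b equals l1 norm of h on Tᶜ
  have hinjOn : ∀ (s : Finset ℕ), (∀ p ∈ s, p < L) →
      ∀ g : Fin N → ℝ, ∑ a ∈ s.image f, g a = ∑ p ∈ s, g (f p) := by
    intro s hs g
    apply Finset.sum_image
    intro p hp q hq hpq
    exact hfinj p q (hs p hp) (hs q hq) hpq
  have hsum1 : ∑ p ∈ Finset.range L, b p = ∑ i ∈ Tᶜ, |h i| := by
    have himg : (Finset.range L).image f = Tᶜ := by
      apply Finset.Subset.antisymm
      · intro a ha
        obtain ⟨p, hp, rfl⟩ := Finset.mem_image.mp ha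
        exact hfmem p (Finset.mem_range.mp hp)
      · intro a ha
        rw [← hmem] at ha
        obtain ⟨⟨p, hp⟩, rfl⟩ := List.mem_iff_get.mp ha
        exact Finset.mem_image.mpr ⟨p, Finset.mem_range.mpr hp, hfval p hp⟩
    rw [← himg, hinjOn (Finset.range L) (fun p hp => Finset.mem_range.mp hp)]
    exact Finset.sum_congr rfl fun p hp => (hbval p (Finset.mem_range.mp hp)).symm ▸ rfl
  -- block l2 bound
  have hk0 : (0:ℝ) < (k:ℝ) := by exact_mod_cast hk
  have hblock : ∀ j, Real.sqrt (∑ i ∈ S j, (h i) ^ 2) ≤ Real.sqrt k * b (j * k) := by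
    intro j
    have hsq : ∑ i ∈ S j, (h i) ^ 2 ≤ (k : ℝ) * (b (j * k)) ^ 2 := by
      rw [hS]
      rw [hinjOn _ (fun p hp => Finset.mem_range.mp (Finset.mem_filter.mp hp).1)]
      have hterm : ∀ p ∈ (Finset.range L).filter (fun p => j * k ≤ p ∧ p < (j + 1) * k),
          (h (f p)) ^ 2 ≤ (b (j * k)) ^ 2 := by
        intro p hp
        rw [Finset.mem_filter, Finset.mem_range] at hp
        have h1 : b p = |h (f p)| := hbval p hp.1
        have h2 : b p ≤ b (j * k) := hbanti (j * k) p hp.2.1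
        have h3 : (h (f p))^2 = (b p)^2 := by rw [h1, sq_abs]
        rw [h3]
        exact pow_le_pow_left₀ (hb0 p) h2 2
      calc ∑ p ∈ (Finset.range L).filter (fun p => j * k ≤ p ∧ p < (j + 1) * k), (h (f p)) ^ 2
          ≤ ∑ p ∈ (Finset.range L).filter (fun p => j * k ≤ p ∧ p < (j + 1) * k),
              (b (j * k)) ^ 2 := Finset.sum_le_sum hterm
        _ = ((Finset.range L).filter (fun p => j * k ≤ p ∧ p < (j + 1) * k)).card
              * (b (j * k)) ^ 2 := by rw [Finset.sum_const, nsmul_eq_mul]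
        _ ≤ (k : ℝ) * (b (j * k)) ^ 2 := by
            apply mul_le_mul_of_nonneg_right _ (sq_nonneg _)
            have hc := hcardS j
            have : ((Finset.range L).filter (fun p => j * k ≤ p ∧ p < (j + 1) * k)).card ≤ k := by
              refine le_trans (Finset.card_le_card (t := Finset.Ico (j*k) ((j+1)*k)) ?_) ?_
              · intro p hp
                rw [Finset.mem_filter] at hp
                exact Finset.mem_Ico.mpr hp.2
              · rw [Nat.card_Ico]
                have : (j + 1) * k = j * k + k := by ring
                omega
            exact_mod_cast this
    calc Real.sqrt (∑ i ∈ S j, (h i) ^ 2) ≤ Real.sqrt ((k:ℝ) * (b (j * k)) ^ 2) :=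
        Real.sqrt_le_sqrt hsq
      _ = Real.sqrt k * b (j * k) := by
          rw [Real.sqrt_mul (le_of_lt hk0), Real.sqrt_sq (hb0 _)]
  -- average bound
  have havg : ∀ j, 1 ≤ j → (k:ℝ) * b (j * k) ≤ ∑ p ∈ Finset.Ico ((j - 1) * k) (j * k), b p := by
    intro j hj
    obtain ⟨i, rfl⟩ : ∃ i, j = i + 1 := ⟨j - 1, by omega⟩
    have hcard : (Finset.Ico (i * k) ((i + 1) * k)).card = k := by
      rw [Nat.card_Ico]
      have : (i + 1) * k = i * k + k := by ring
      omega
    have : ∀ p ∈ Finset.Ico (i * k) ((i + 1) * k), b ((i + 1) * k) ≤ b p := by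
      intro p hp
      exact hbanti p ((i + 1) * k) (le_of_lt (Finset.mem_Ico.mp hp).2)
    have hle2 := Finset.card_nsmul_le_sum _ _ _ this
    rw [hcard, nsmul_eq_mul] at hle2
    simpa using hle2
  -- assemble the sum bound
  have hmain : ∑ j ∈ Finset.Ico 1 L, Real.sqrt (∑ i ∈ S j, (h i) ^ 2)
      ≤ (Real.sqrt k)⁻¹ * ∑ i ∈ Tᶜ, |h i| := by
    have hs1 : ∑ j ∈ Finset.Ico 1 L, Real.sqrt (∑ i ∈ S j, (h i) ^ 2)
        ≤ Real.sqrt k * ∑ j ∈ Finset.Ico 1 L, b (j * k) := by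
      rw [Finset.mul_sum]
      exact Finset.sum_le_sum fun j _ => hblock j
    have hs2 : (k:ℝ) * ∑ j ∈ Finset.Ico 1 L, b (j * k) ≤ ∑ i ∈ Tᶜ, |h i| := by
      rw [Finset.mul_sum]
      calc ∑ j ∈ Finset.Ico 1 L, (k:ℝ) * b (j * k)
          ≤ ∑ j ∈ Finset.Ico 1 L, ∑ p ∈ Finset.Ico ((j - 1) * k) (j * k), b p :=
            Finset.sum_le_sum fun j hj => havg j (Finset.mem_Ico.mp hj).1
        _ = ∑ i ∈ Finset.range (L - 1), ∑ p ∈ Finset.Ico (i * k) ((i + 1) * k), b p := by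
            rw [Finset.sum_Ico_eq_sum_range]
            apply Finset.sum_congr rfl
            intro i _
            have h1 : 1 + i - 1 = i := by omega
            rw [h1, add_comm 1 i]
        _ = ∑ p ∈ Finset.range ((L - 1) * k), b p := blocks_cover_sum b k (L - 1)
        _ ≤ ∑ p ∈ Finset.range L, b p := sum_range_le_of_zero_tail b L hb0 hbz _
        _ = ∑ i ∈ Tᶜ, |h i| := hsum1
    have hY0 : 0 ≤ ∑ i ∈ Tᶜ, |h i| := Finset.sum_nonneg fun i _ => abs_nonneg _
    have hsk : Real.sqrt k * Real.sqrt k = (k:ℝ) := Real.mul_self_sqrt (le_of_lt hk0)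
    have hskpos : 0 < Real.sqrt k := Real.sqrt_pos.mpr hk0
    have hX : ∑ j ∈ Finset.Ico 1 L, b (j * k) ≤ (∑ i ∈ Tᶜ, |h i|) / k :=
      (le_div_iff₀' hk0).mpr hs2
    calc ∑ j ∈ Finset.Ico 1 L, Real.sqrt (∑ i ∈ S j, (h i) ^ 2)
        ≤ Real.sqrt k * ∑ j ∈ Finset.Ico 1 L, b (j * k) := hs1
      _ ≤ Real.sqrt k * ((∑ i ∈ Tᶜ, |h i|) / k) :=
          mul_le_mul_of_nonneg_left hX (le_of_lt hskpos)
      _ = (Real.sqrt k)⁻¹ * ∑ i ∈ Tᶜ, |h i| := by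
          rw [inv_mul_eq_div, mul_div_assoc', div_eq_div_iff (ne_of_gt hk0) (ne_of_gt hskpos)]
          linear_combination (∑ i ∈ Tᶜ, |h i|) * hsk
  exact ⟨L, S, hsub, hcardS, hdisj, hbiU, hmain⟩

noncomputable section

set_option maxHeartbeats 2000000 in
theorem stmt15 (δ : ℝ) (hδ0 : 0 < δ) (hδ1 : δ < Real.sqrt 2 - 1) :
    ∃ C₀ C₁ : ℝ, ∀ (n N k : ℕ), 1 ≤ k →
      ∀ Φ : Matrix (Fin n) (Fin N) ℝ,
      (∀ w : Fin N → ℝ, (Finset.univ.filter (fun j => w j ≠ 0)).card ≤ 2 * k →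
        (1 - δ) * ∑ j, (w j) ^ 2 ≤ ∑ i, (Φ.mulVec w i) ^ 2 ∧
        ∑ i, (Φ.mulVec w i) ^ 2 ≤ (1 + δ) * ∑ j, (w j) ^ 2) →
      ∀ x : Fin N → ℝ, ∀ ε : ℝ, 0 ≤ ε →
      ∀ z : Fin n → ℝ, Real.sqrt (∑ i, (z i) ^ 2) ≤ ε →
      -- `T` is a set of `k` coordinates of largest absolute value, so that
      -- `x_{(k)} = fun j => if j ∈ T then x j else 0`
      ∀ T : Finset (Fin N), T.card = min k N →
        (∀ i ∈ T, ∀ j ∉ T, |x j| ≤ |x i|) →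
      ∀ xstar : Fin N → ℝ,
        Real.sqrt (∑ i, ((Φ.mulVec x i + z i) - Φ.mulVec xstar i) ^ 2) ≤ ε →
        (∀ w : Fin N → ℝ,
          Real.sqrt (∑ i, ((Φ.mulVec x i + z i) - Φ.mulVec w i) ^ 2) ≤ ε →
          ∑ j, |xstar j| ≤ ∑ j, |w j|) →
        Real.sqrt (∑ j, (xstar j - x j) ^ 2)
          ≤ C₀ * (Real.sqrt k)⁻¹ * (∑ j, |x j - (if j ∈ T then x j else 0)|) + C₁ * ε := by
  classical
  have h2sq : Real.sqrt 2 ^ 2 = 2 := Real.sq_sqrt (by norm_num)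
  have hs2pos : 0 < Real.sqrt 2 := Real.sqrt_pos.mpr (by norm_num)
  set ρ := 1 - δ - Real.sqrt 2 * δ with hρ
  have hρpos : 0 < ρ := by
    rw [hρ]
    have key := mul_lt_mul_of_pos_left hδ1 (show (0:ℝ) < 1 + Real.sqrt 2 by positivity)
    have e1 : (1 + Real.sqrt 2) * (Real.sqrt 2 - 1) = 1 := by linear_combination h2sq
    rw [e1] at key
    linarith [key]
  clear_value ρ
  refine ⟨4 * Real.sqrt 2 * δ / ρ + 2, 4 * Real.sqrt (1 + δ) / ρ, ?_⟩
  intro n N k hk Φ hRIP x ε hε z hz T hTcard _hTtop xstar hfeas hmin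
  set h := fun i => xstar i - x i with hh
  have hxsub : h = xstar - x := rfl
  have hgoaleq : (∑ j, (xstar j - x j) ^ 2) = ∑ j, (h j) ^ 2 := rfl
  clear_value h
  obtain ⟨m, S, hsub, hcardS, hdisj, hbiU, hblocksum⟩ := exists_blocks h T k hk
  set P := fun (W : Finset (Fin N)) (i : Fin N) => if i ∈ W then h i else 0 with hP
  have hPsupp : ∀ W : Finset (Fin N), ∀ i, i ∉ W → P W i = 0 := fun W i hi => if_neg hi
  have hPsq : ∀ W : Finset (Fin N), ∑ j, (P W j) ^ 2 = ∑ j ∈ W, (h j) ^ 2 := by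
    intro W
    calc ∑ j, (P W j) ^ 2 = ∑ j, (if j ∈ W then (h j) ^ 2 else 0) :=
        Finset.sum_congr rfl (fun j _ => by by_cases hj : j ∈ W <;> simp [hP, hj])
      _ = ∑ j ∈ W, (h j) ^ 2 := by rw [Finset.sum_ite_mem, Finset.univ_inter]
  have hcard_supp : ∀ W : Finset (Fin N),
      (Finset.univ.filter (fun j => P W j ≠ 0)).card ≤ W.card := by
    intro W
    apply Finset.card_le_card
    intro j hj
    rw [Finset.mem_filter] at hj
    by_contra hjW
    exact hj.2 (hPsupp W j hjW)
  clear_value P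
  have hcT : T.card ≤ k := by rw [hTcard]; exact min_le_left k N
  have hkR : (0:ℝ) < (k:ℝ) := by exact_mod_cast hk
  have hskpos : 0 < Real.sqrt k := Real.sqrt_pos.mpr hkR
  -- tube constraint
  have htube : Real.sqrt (∑ i, (Φ.mulVec h i) ^ 2) ≤ 2 * ε := by
    have hlin : ∀ i, Φ.mulVec h i
        = (-((Φ.mulVec x i + z i) - Φ.mulVec xstar i)) + z i := by
      intro i
      rw [hxsub, Matrix.mulVec_sub]
      simp [Pi.sub_apply]
      ring
    calc Real.sqrt (∑ i, (Φ.mulVec h i) ^ 2)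
        = Real.sqrt (∑ i, ((-((Φ.mulVec x i + z i) - Φ.mulVec xstar i)) + z i) ^ 2) := by
          congr 1
          exact Finset.sum_congr rfl fun i _ => by rw [hlin i]
      _ ≤ Real.sqrt (∑ i, (-((Φ.mulVec x i + z i) - Φ.mulVec xstar i)) ^ 2)
            + Real.sqrt (∑ i, (z i) ^ 2) := mymink Finset.univ _ _
      _ ≤ ε + ε := by
          apply add_le_add _ hz
          have : ∑ i, (-((Φ.mulVec x i + z i) - Φ.mulVec xstar i)) ^ 2
              = ∑ i, ((Φ.mulVec x i + z i) - Φ.mulVec xstar i) ^ 2 :=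
            Finset.sum_congr rfl fun i _ => by ring
          rw [this]
          exact hfeas
      _ = 2 * ε := by ring
  -- cone constraint
  have hl1 : ∑ j, |xstar j| ≤ ∑ j, |x j| := by
    apply hmin x
    simpa using hz
  have hcone : ∑ i ∈ Tᶜ, |h i| ≤ ∑ i ∈ T, |h i| + 2 * ∑ i ∈ Tᶜ, |x i| := by
    have hA : ∑ i ∈ T, (|x i| - |h i|) ≤ ∑ i ∈ T, |xstar i| := by
      apply Finset.sum_le_sum
      intro i _
      calc |x i| - |h i| = |x i| - |-(h i)| := by rw [abs_neg]
        _ ≤ |x i - (-(h i))| := abs_sub_abs_le_abs_sub _ _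
        _ = |xstar i| := by congr 1; simp [hh]
    have hB : ∑ i ∈ Tᶜ, (|h i| - |x i|) ≤ ∑ i ∈ Tᶜ, |xstar i| := by
      apply Finset.sum_le_sum
      intro i _
      calc |h i| - |x i| ≤ |h i - (-(x i))| := by
            rw [← abs_neg (x i)]
            exact abs_sub_abs_le_abs_sub _ _
        _ = |xstar i| := by congr 1; simp [hh]
    rw [← Finset.sum_add_sum_compl T (fun j => |xstar j|),
        ← Finset.sum_add_sum_compl T (fun j => |x j|)] at hl1
    rw [Finset.sum_sub_distrib] at hA hB
    linarith
  -- l1-l2 bound on T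
  have hTl12 : ∑ i ∈ T, |h i| ≤ Real.sqrt k * Real.sqrt (∑ i ∈ T, (h i) ^ 2) := by
    calc ∑ i ∈ T, |h i| = ∑ i ∈ T, |h i| * 1 := by simp
      _ ≤ Real.sqrt (∑ i ∈ T, |h i| ^ 2) * Real.sqrt (∑ i ∈ T, (1:ℝ) ^ 2) := mycs T _ _
      _ = Real.sqrt (∑ i ∈ T, (h i) ^ 2) * Real.sqrt (T.card) := by
          congr 2
          · exact Finset.sum_congr rfl fun i _ => sq_abs _
          · simp
      _ ≤ Real.sqrt (∑ i ∈ T, (h i) ^ 2) * Real.sqrt k := by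
          apply mul_le_mul_of_nonneg_left _ (Real.sqrt_nonneg _)
          apply Real.sqrt_le_sqrt
          exact_mod_cast hcT
      _ = Real.sqrt k * Real.sqrt (∑ i ∈ T, (h i) ^ 2) := mul_comm _ _
  -- key quantities
  set a0 := Real.sqrt (∑ i ∈ T, (h i) ^ 2) with ha0
  set a1 := Real.sqrt (∑ i ∈ S 0, (h i) ^ 2) with ha1
  set A := Real.sqrt (∑ i ∈ T ∪ S 0, (h i) ^ 2) with hAdef
  set B2 := ∑ j ∈ Finset.Ico 1 m, Real.sqrt (∑ i ∈ S j, (h i) ^ 2) with hB2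
  set e₀ := (Real.sqrt k)⁻¹ * ∑ i ∈ Tᶜ, |x i| with he₀
  have ha0n : 0 ≤ a0 := Real.sqrt_nonneg _
  have ha1n : 0 ≤ a1 := Real.sqrt_nonneg _
  have hAn : 0 ≤ A := Real.sqrt_nonneg _
  have hB2n : 0 ≤ B2 := Finset.sum_nonneg fun j _ => Real.sqrt_nonneg _
  have he₀n : 0 ≤ e₀ := by
    apply mul_nonneg (inv_nonneg.mpr (Real.sqrt_nonneg _))
    exact Finset.sum_nonneg fun i _ => abs_nonneg _
  have hdTS0 : Disjoint T (S 0) := by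
    rw [Finset.disjoint_left]
    intro a haT haS
    exact (Finset.mem_compl.mp (hsub 0 haS)) haT
  have hUnionsq : ∑ i ∈ T ∪ S 0, (h i) ^ 2 = ∑ i ∈ T, (h i) ^ 2 + ∑ i ∈ S 0, (h i) ^ 2 :=
    Finset.sum_union hdTS0
  have hA2 : A ^ 2 = ∑ i ∈ T ∪ S 0, (h i) ^ 2 := Real.sq_sqrt (by positivity)
  have ha02 : a0 ^ 2 = ∑ i ∈ T, (h i) ^ 2 := Real.sq_sqrt (by positivity)
  have ha12 : a1 ^ 2 = ∑ i ∈ S 0, (h i) ^ 2 := Real.sq_sqrt (by positivity)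
  have ha0A : a0 ≤ A := by
    apply Real.sqrt_le_sqrt
    rw [hUnionsq]
    have : 0 ≤ ∑ i ∈ S 0, (h i) ^ 2 := Finset.sum_nonneg fun i _ => sq_nonneg _
    linarith
  have ha01 : a0 + a1 ≤ Real.sqrt 2 * A := by
    have hsq : (a0 + a1) ^ 2 ≤ (Real.sqrt 2 * A) ^ 2 := by
      rw [mul_pow, h2sq, hA2, hUnionsq, ← ha02, ← ha12]
      linarith [sq_nonneg (a0 - a1)]
    calc a0 + a1 = Real.sqrt ((a0 + a1) ^ 2) := (Real.sqrt_sq (by positivity)).symm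
      _ ≤ Real.sqrt ((Real.sqrt 2 * A) ^ 2) := Real.sqrt_le_sqrt hsq
      _ = Real.sqrt 2 * A := Real.sqrt_sq (by positivity)
  clear_value a0 a1 A B2 e₀
  -- B2 bound
  have hB2le : B2 ≤ A + 2 * e₀ := by
    have hinv : (Real.sqrt k)⁻¹ * Real.sqrt k = 1 := inv_mul_cancel₀ (ne_of_gt hskpos)
    calc B2 ≤ (Real.sqrt k)⁻¹ * ∑ i ∈ Tᶜ, |h i| := hblocksum
      _ ≤ (Real.sqrt k)⁻¹ * (∑ i ∈ T, |h i| + 2 * ∑ i ∈ Tᶜ, |x i|) := by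
          apply mul_le_mul_of_nonneg_left hcone (inv_nonneg.mpr (Real.sqrt_nonneg _))
      _ ≤ (Real.sqrt k)⁻¹ * (Real.sqrt k * a0 + 2 * ∑ i ∈ Tᶜ, |x i|) := by
          apply mul_le_mul_of_nonneg_left _ (inv_nonneg.mpr (Real.sqrt_nonneg _))
          linarith [hTl12]
      _ = a0 + 2 * e₀ := by
          rw [he₀, mul_add, ← mul_assoc, hinv, ← mul_assoc]
          ring
      _ ≤ A + 2 * e₀ := by linarith
  -- decomposition of h
  have hdecomp : ∀ i, h i = P (T ∪ S 0) i + ∑ j ∈ Finset.Ico 1 m, P (S j) i := by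
    intro i
    by_cases hi : i ∈ T ∪ S 0
    · have hz' : ∑ j ∈ Finset.Ico 1 m, P (S j) i = 0 := by
        apply Finset.sum_eq_zero
        intro j hj
        have hj1 : 1 ≤ j := (Finset.mem_Ico.mp hj).1
        apply hPsupp
        intro hiSj
        rcases Finset.mem_union.mp hi with hiT | hiS0
        · exact (Finset.mem_compl.mp (hsub j hiSj)) hiT
        · exact Finset.disjoint_left.mp (hdisj 0 j (by omega)) hiS0 hiSj
      rw [hz', add_zero, hP]
      simp [hi]
    · have hiT : i ∉ T := fun hiT => hi (Finset.mem_union_left _ hiT)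
      have hiTc : i ∈ Tᶜ := Finset.mem_compl.mpr hiT
      rw [hbiU] at hiTc
      obtain ⟨j0, hj0r, hij0⟩ := Finset.mem_biUnion.mp hiTc
      have hj0ne : j0 ≠ 0 := by
        intro hj0
        exact hi (Finset.mem_union_right _ (hj0 ▸ hij0))
      have hj0m : j0 ∈ Finset.Ico 1 m := by
        rw [Finset.mem_Ico]
        exact ⟨by omega, Finset.mem_range.mp hj0r⟩
      have hsum : ∑ j ∈ Finset.Ico 1 m, P (S j) i = P (S j0) i := by
        apply Finset.sum_eq_single j0
        · intro j hj hne
          exact hPsupp _ _ (fun hiSj => Finset.disjoint_left.mp (hdisj j j0 hne) hiSj hij0)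
        · intro habs
          exact absurd hj0m habs
      rw [hsum, hPsupp _ _ hi, zero_add, hP]
      simp [hij0]
  -- mulVec decomposition
  have hfun : h = P (T ∪ S 0) + ∑ j ∈ Finset.Ico 1 m, P (S j) := by
    funext i
    rw [Pi.add_apply, Finset.sum_apply]
    exact hdecomp i
  have hmv : Φ.mulVec h = Φ.mulVec (P (T ∪ S 0))
      + ∑ j ∈ Finset.Ico 1 m, Φ.mulVec (P (S j)) := by
    have h1 : Φ.mulVec (∑ j ∈ Finset.Ico 1 m, P (S j))
        = ∑ j ∈ Finset.Ico 1 m, Φ.mulVec (P (S j)) := by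
      have h2 := map_sum (Matrix.mulVecLin Φ) (fun j => P (S j)) (Finset.Ico 1 m)
      simpa only [Matrix.mulVecLin_apply] using h2
    rw [hfun, Matrix.mulVec_add, h1]
  set F := Φ.mulVec (P (T ∪ S 0)) with hF
  clear_value F
  -- inner product identity
  have hip : ∑ i, F i ^ 2 = (∑ i, F i * Φ.mulVec h i)
      - ∑ j ∈ Finset.Ico 1 m, ∑ i, F i * Φ.mulVec (P (S j)) i := by
    have h1 : ∑ i, F i * Φ.mulVec h i
        = ∑ i, F i ^ 2 + ∑ i, F i * (∑ j ∈ Finset.Ico 1 m, Φ.mulVec (P (S j)) i) := by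
      rw [← Finset.sum_add_distrib]
      apply Finset.sum_congr rfl
      intro i _
      rw [hmv]
      simp only [Pi.add_apply, Finset.sum_apply]
      ring
    have h2 : ∑ i, F i * (∑ j ∈ Finset.Ico 1 m, Φ.mulVec (P (S j)) i)
        = ∑ j ∈ Finset.Ico 1 m, ∑ i, F i * Φ.mulVec (P (S j)) i := by
      simp_rw [Finset.mul_sum]
      rw [Finset.sum_comm]
    rw [h1, h2]
    ring
  -- RIP bounds on T ∪ S 0
  have hcard01 : (Finset.univ.filter (fun j => P (T ∪ S 0) j ≠ 0)).card ≤ 2 * k := by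
    refine le_trans (hcard_supp _) (le_trans (Finset.card_union_le T (S 0)) ?_)
    have := hcardS 0
    omega
  have hRIP01 := hRIP (P (T ∪ S 0)) hcard01
  have hPA : ∑ j, (P (T ∪ S 0) j) ^ 2 = A ^ 2 := by rw [hPsq, hA2]
  have hRIPlo : (1 - δ) * A ^ 2 ≤ ∑ i, F i ^ 2 := by
    have h1 := hRIP01.1
    rw [hPA, ← hF] at h1
    exact h1
  have hFnorm : Real.sqrt (∑ i, F i ^ 2) ≤ Real.sqrt (1 + δ) * A := by
    have hhi := hRIP01.2
    rw [hPA, ← hF] at hhi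
    calc Real.sqrt (∑ i, F i ^ 2) ≤ Real.sqrt ((1 + δ) * A ^ 2) := Real.sqrt_le_sqrt hhi
      _ = Real.sqrt (1 + δ) * A := by
          rw [Real.sqrt_mul (by linarith) , Real.sqrt_sq hAn]
  have hcross : ∑ i, F i * Φ.mulVec h i ≤ Real.sqrt (1 + δ) * A * (2 * ε) := by
    calc ∑ i, F i * Φ.mulVec h i
        ≤ Real.sqrt (∑ i, F i ^ 2) * Real.sqrt (∑ i, (Φ.mulVec h i) ^ 2) :=
          mycs Finset.univ _ _
      _ ≤ (Real.sqrt (1 + δ) * A) * (2 * ε) := by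
          apply mul_le_mul hFnorm htube (Real.sqrt_nonneg _)
          positivity
  -- cross terms with blocks
  have hPsplit : P (T ∪ S 0) = fun i => P T i + P (S 0) i := by
    funext i
    by_cases hiT : i ∈ T
    · have hiS : i ∉ S 0 := fun hs => Finset.disjoint_left.mp hdTS0 hiT hs
      simp [hP, hiT, hiS, Finset.mem_union]
    · by_cases hiS : i ∈ S 0
      · simp [hP, hiT, hiS, Finset.mem_union]
      · simp [hP, hiT, hiS, Finset.mem_union]
  have hcross2 : ∀ j ∈ Finset.Ico 1 m,
      -(∑ i, F i * Φ.mulVec (P (S j)) i)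
        ≤ δ * (Real.sqrt 2 * A) * Real.sqrt (∑ i ∈ S j, (h i) ^ 2) := by
    intro j hj
    have hj1 : 1 ≤ j := (Finset.mem_Ico.mp hj).1
    set sj := Real.sqrt (∑ i ∈ S j, (h i) ^ 2) with hsj
    have hsjn : 0 ≤ sj := Real.sqrt_nonneg _
    have hnegP : ∀ W : Finset (Fin N), (fun i => -(P W i)) = -(P W) := fun W => rfl
    have hnegsq : ∀ W : Finset (Fin N), ∑ i, ((-(P W)) i) ^ 2 = ∑ i ∈ W, (h i) ^ 2 := by
      intro W
      rw [← hPsq W]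
      exact Finset.sum_congr rfl fun i _ => by simp
    have hmulneg : Φ.mulVec (-(P (S j))) = -(Φ.mulVec (P (S j))) := Matrix.mulVec_neg _ _
    -- first: T vs S j
    have hdjT : Disjoint T (S j) := by
      rw [Finset.disjoint_left]
      intro a haT haS
      exact (Finset.mem_compl.mp (hsub j haS)) haT
    have hcardTj : T.card + (S j).card ≤ 2 * k := by
      have := hcardS j
      omega
    have hr1 := rip_inner Φ hRIP (P T) (-(P (S j))) T (S j)
      (fun i hi => hPsupp T i hi)
      (fun i hi => by rw [Pi.neg_apply, hPsupp (S j) i hi, neg_zero])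
      hdjT hcardTj
    have hcard0j : (S 0).card + (S j).card ≤ 2 * k := by
      have h1 := hcardS 0
      have h2 := hcardS j
      omega
    have hr2 := rip_inner Φ hRIP (P (S 0)) (-(P (S j))) (S 0) (S j)
      (fun i hi => hPsupp (S 0) i hi)
      (fun i hi => by rw [Pi.neg_apply, hPsupp (S j) i hi, neg_zero])
      (hdisj 0 j (by omega)) hcard0j
    rw [hmulneg] at hr1 hr2
    rw [hnegsq (S j)] at hr1 hr2
    rw [hPsq T] at hr1
    rw [hPsq (S 0)] at hr2
    rw [← ha0, ← hsj] at hr1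
    rw [← ha1, ← hsj] at hr2
    have hFsplit : ∀ i, F i = Φ.mulVec (P T) i + Φ.mulVec (P (S 0)) i := by
      intro i
      rw [hF, hPsplit]
      have : (fun i => P T i + P (S 0) i) = P T + P (S 0) := rfl
      rw [this, Matrix.mulVec_add]
      simp
    have hexp : -(∑ i, F i * Φ.mulVec (P (S j)) i)
        = ∑ i, Φ.mulVec (P T) i * (-(Φ.mulVec (P (S j)))) i
          + ∑ i, Φ.mulVec (P (S 0)) i * (-(Φ.mulVec (P (S j)))) i := by
      rw [← Finset.sum_add_distrib, ← Finset.sum_neg_distrib]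
      apply Finset.sum_congr rfl
      intro i _
      rw [hFsplit i]
      simp only [Pi.neg_apply]
      ring
    rw [hexp]
    calc ∑ i, Φ.mulVec (P T) i * (-(Φ.mulVec (P (S j)))) i
          + ∑ i, Φ.mulVec (P (S 0)) i * (-(Φ.mulVec (P (S j)))) i
        ≤ δ * a0 * sj + δ * a1 * sj := add_le_add hr1 hr2
      _ = δ * (a0 + a1) * sj := by ring
      _ ≤ δ * (Real.sqrt 2 * A) * sj := by
          apply mul_le_mul_of_nonneg_right _ hsjn
          apply mul_le_mul_of_nonneg_left ha01 (le_of_lt hδ0)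
  -- assemble the main inequality
  have hsum_cross2 : -(∑ j ∈ Finset.Ico 1 m, ∑ i, F i * Φ.mulVec (P (S j)) i)
      ≤ δ * (Real.sqrt 2 * A) * B2 := by
    rw [← Finset.sum_neg_distrib, hB2, Finset.mul_sum]
    exact Finset.sum_le_sum hcross2
  have hAineq : (1 - δ) * A ^ 2
      ≤ Real.sqrt (1 + δ) * A * (2 * ε) + δ * (Real.sqrt 2 * A) * (A + 2 * e₀) := by
    have hstep : δ * (Real.sqrt 2 * A) * B2 ≤ δ * (Real.sqrt 2 * A) * (A + 2 * e₀) := by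
      apply mul_le_mul_of_nonneg_left hB2le
      positivity
    calc (1 - δ) * A ^ 2 ≤ ∑ i, F i ^ 2 := hRIPlo
      _ = (∑ i, F i * Φ.mulVec h i)
          - ∑ j ∈ Finset.Ico 1 m, ∑ i, F i * Φ.mulVec (P (S j)) i := hip
      _ ≤ Real.sqrt (1 + δ) * A * (2 * ε) + δ * (Real.sqrt 2 * A) * B2 := by
          rw [sub_eq_add_neg]
          exact add_le_add hcross hsum_cross2
      _ ≤ _ := add_le_add_right hstep _
  have hAbound : A ≤ (2 * Real.sqrt (1 + δ) * ε + 2 * Real.sqrt 2 * δ * e₀) / ρ := by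
    rcases eq_or_lt_of_le hAn with hA0 | hApos
    · rw [← hA0]
      positivity
    · rw [le_div_iff₀ hρpos, hρ]
      have h' : (A * (1 - δ - Real.sqrt 2 * δ)) * A
          ≤ (2 * Real.sqrt (1 + δ) * ε + 2 * Real.sqrt 2 * δ * e₀) * A := by
        linarith [hAineq]
      exact le_of_mul_le_mul_right h' hApos
  -- final assembly
  have hfinal2 : Real.sqrt (∑ j, (h j) ^ 2) ≤ A + B2 := by
    have hsplitU : ∑ j, (h j) ^ 2
        = ∑ j ∈ T ∪ S 0, (h j) ^ 2 + ∑ j' ∈ Finset.Ico 1 m, ∑ i ∈ S j', (h i) ^ 2 := by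
      have hdisjU : (↑(Finset.range m) : Set ℕ).PairwiseDisjoint S := by
        intro i _ j _ hij
        exact hdisj i j hij
      have h1 : ∑ j ∈ Tᶜ, (h j) ^ 2 = ∑ j' ∈ Finset.range m, ∑ i ∈ S j', (h i) ^ 2 := by
        rw [hbiU]
        exact Finset.sum_biUnion hdisjU
      rcases Nat.eq_zero_or_pos m with hm0 | hmpos
      · have hTc : Tᶜ = ∅ := by rw [hbiU, hm0]; simp
        have hS0 : S 0 ⊆ ∅ := hTc ▸ hsub 0
        have hS0' : S 0 = ∅ := Finset.subset_empty.mp hS0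
        rw [← Finset.sum_add_sum_compl T (fun j => (h j) ^ 2), hTc, hS0', hm0]
        simp
      · have h2 : ∑ j' ∈ Finset.range m, ∑ i ∈ S j', (h i) ^ 2
            = ∑ i ∈ S 0, (h i) ^ 2 + ∑ j' ∈ Finset.Ico 1 m, ∑ i ∈ S j', (h i) ^ 2 := by
          rw [Finset.range_eq_Ico, Finset.sum_eq_sum_Ico_succ_bot hmpos]
        rw [← Finset.sum_add_sum_compl T (fun j => (h j) ^ 2), h1, h2, hUnionsq]
        ring
    have hblocksq : ∑ j' ∈ Finset.Ico 1 m, ∑ i ∈ S j', (h i) ^ 2 ≤ B2 ^ 2 := by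
      have heq : ∀ j' ∈ Finset.Ico 1 m,
          ∑ i ∈ S j', (h i) ^ 2 = (Real.sqrt (∑ i ∈ S j', (h i) ^ 2)) ^ 2 :=
        fun j' _ => (Real.sq_sqrt (Finset.sum_nonneg fun i _ => sq_nonneg _)).symm
      rw [Finset.sum_congr rfl heq, hB2]
      exact sum_sq_le_sq_sum_of_nonneg fun j' _ => Real.sqrt_nonneg _
    have hsq : ∑ j, (h j) ^ 2 ≤ (A + B2) ^ 2 := by
      rw [hsplitU, ← hA2]
      linarith [hblocksq, mul_nonneg hAn hB2n]
    calc Real.sqrt (∑ j, (h j) ^ 2) ≤ Real.sqrt ((A + B2) ^ 2) := Real.sqrt_le_sqrt hsq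
      _ = A + B2 := Real.sqrt_sq (by positivity)
  have hRHS : ∑ j, |x j - (if j ∈ T then x j else 0)| = ∑ i ∈ Tᶜ, |x i| := by
    rw [← Finset.sum_add_sum_compl T (fun j => |x j - (if j ∈ T then x j else 0)|)]
    have h1 : ∑ j ∈ T, |x j - (if j ∈ T then x j else 0)| = 0 :=
      Finset.sum_eq_zero fun j hj => by rw [if_pos hj]; simp
    have h2 : ∑ j ∈ Tᶜ, |x j - (if j ∈ T then x j else 0)| = ∑ i ∈ Tᶜ, |x i| :=
      Finset.sum_congr rfl fun j hj => by rw [if_neg (Finset.mem_compl.mp hj)]; simp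
    rw [h1, h2, zero_add]
  have hchain : Real.sqrt (∑ j, (h j) ^ 2)
      ≤ (4 * Real.sqrt 2 * δ / ρ + 2) * e₀ + (4 * Real.sqrt (1 + δ) / ρ) * ε := by
    calc Real.sqrt (∑ j, (h j) ^ 2) ≤ A + B2 := hfinal2
      _ ≤ A + (A + 2 * e₀) := by linarith [hB2le]
      _ = 2 * A + 2 * e₀ := by ring
      _ ≤ 2 * ((2 * Real.sqrt (1 + δ) * ε + 2 * Real.sqrt 2 * δ * e₀) / ρ) + 2 * e₀ := by
          linarith [hAbound]
      _ = (4 * Real.sqrt 2 * δ / ρ + 2) * e₀ + (4 * Real.sqrt (1 + δ) / ρ) * ε := by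
          field_simp
          ring
  rw [hgoaleq]
  calc Real.sqrt (∑ j, (h j) ^ 2)
      ≤ (4 * Real.sqrt 2 * δ / ρ + 2) * e₀ + (4 * Real.sqrt (1 + δ) / ρ) * ε := hchain
    _ = (4 * Real.sqrt 2 * δ / ρ + 2) * (Real.sqrt k)⁻¹
          * (∑ j, |x j - (if j ∈ T then x j else 0)|) + (4 * Real.sqrt (1 + δ) / ρ) * ε := by
        rw [hRHS, he₀]
        ring
end
end
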